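/- arXiv:1404.6808 — 8 statements merged into one kernel-verified Lean document; each statement's English description precedes it below -/
import Mathlib

section
/- For every convex body K in Euclidean n-space ℝⁿ (n ≥ 1) one has w(K) ≤ r(K) + R(K) and r(K) + R(K) ≤ D(K). -/
open Metric Set
open scoped RealInnerProductSpace

/-- The diameter of a set. -/
noncomputable def sDiam {n : ℕ} (K : Set (EuclideanSpace ℝ (Fin n))) : ℝ :=
  Metric.diam K

/-- The circumradius: radius of the smallest enclosing closed ball. -/
noncomputable def circumradius {n : ℕ} (K : Set (EuclideanSpace ℝ (Fin n))) : ℝ :=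
  sInf {ρ : ℝ | 0 ≤ ρ ∧ ∃ c, K ⊆ Metric.closedBall c ρ}

/-- The inradius: radius of a largest inscribed closed ball. -/
noncomputable def inradius {n : ℕ} (K : Set (EuclideanSpace ℝ (Fin n))) : ℝ :=
  sSup {ρ : ℝ | 0 ≤ ρ ∧ ∃ c, Metric.closedBall c ρ ⊆ K}

/-- The (minimal) width: the smallest breadth over all directions. -/
noncomputable def width {n : ℕ} (K : Set (EuclideanSpace ℝ (Fin n))) : ℝ :=
  sInf {b : ℝ | ∃ u : EuclideanSpace ℝ (Fin n), ‖u‖ = 1 ∧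
    b = sSup ((fun x => (inner ℝ u x : ℝ)) '' K) - sInf ((fun x => (inner ℝ u x : ℝ)) '' K)}

namespace WidthAux

variable {n : ℕ}

/-- Support function of `K`. -/
noncomputable def supF (K : Set (EuclideanSpace ℝ (Fin n)))
    (u : EuclideanSpace ℝ (Fin n)) : ℝ :=
  sSup ((fun x => (inner ℝ u x : ℝ)) '' K)

lemma img_compact {K : Set (EuclideanSpace ℝ (Fin n))} (hcp : IsCompact K)
    (u : EuclideanSpace ℝ (Fin n)) :
    IsCompact ((fun x => (inner ℝ u x : ℝ)) '' K) :=
  hcp.image (continuous_const.inner continuous_id)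

lemma img_ne {K : Set (EuclideanSpace ℝ (Fin n))} (hne : K.Nonempty)
    (u : EuclideanSpace ℝ (Fin n)) :
    ((fun x => (inner ℝ u x : ℝ)) '' K).Nonempty := hne.image _

lemma le_supF {K : Set (EuclideanSpace ℝ (Fin n))} (hcp : IsCompact K)
    (u : EuclideanSpace ℝ (Fin n)) {x : EuclideanSpace ℝ (Fin n)} (hx : x ∈ K) :
    ⟪u, x⟫ ≤ supF K u :=
  le_csSup (img_compact hcp u).bddAbove ⟨x, hx, rfl⟩

lemma supF_le {K : Set (EuclideanSpace ℝ (Fin n))} (hne : K.Nonempty)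
    {u : EuclideanSpace ℝ (Fin n)} {a : ℝ} (h : ∀ x ∈ K, ⟪u, x⟫ ≤ a) :
    supF K u ≤ a :=
  csSup_le (img_ne hne u) (by rintro b ⟨x, hx, rfl⟩; exact h x hx)

lemma supF_continuous {K : Set (EuclideanSpace ℝ (Fin n))} (hne : K.Nonempty)
    (hcp : IsCompact K) : Continuous (supF K) := by
  obtain ⟨M, hM⟩ := hcp.isBounded.exists_norm_le
  have key : ∀ u v : EuclideanSpace ℝ (Fin n),
      supF K u ≤ supF K v + M * ‖u - v‖ := by
    intro u v
    refine supF_le hne fun x hx => ?_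
    have h1 : ⟪u, x⟫ = ⟪v, x⟫ + ⟪u - v, x⟫ := by rw [← inner_add_left]; congr 1; abel
    have h2 : ⟪u - v, x⟫ ≤ ‖u - v‖ * ‖x‖ :=
      (le_abs_self _).trans (abs_real_inner_le_norm _ _)
    have h3 : ‖u - v‖ * ‖x‖ ≤ ‖u - v‖ * M :=
      mul_le_mul_of_nonneg_left (hM x hx) (norm_nonneg _)
    have := le_supF hcp v hx
    nlinarith [norm_nonneg (u - v)]
  have hM0 : 0 ≤ M := by
    obtain ⟨x, hx⟩ := hne
    exact (norm_nonneg x).trans (hM x hx)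
  refine lipschitzWith_iff_dist_le_mul.mpr ?_ |>.continuous (K := (⟨M, hM0⟩ : NNReal))
  intro u v
  change dist (supF K u) (supF K v) ≤ M * dist u v
  rw [Real.dist_eq, abs_sub_le_iff]
  constructor
  · have := key u v; rw [dist_eq_norm]; linarith
  · have := key v u; rw [dist_eq_norm, norm_sub_rev]; linarith

/-- `F K p` = sup of radii `ρ` such that `closedBall p ρ ⊆ K` (through support functions). -/
noncomputable def Ffun (K : Set (EuclideanSpace ℝ (Fin n))) (p : EuclideanSpace ℝ (Fin n)) : ℝ :=
  sInf ((fun u => supF K u - ⟪u, p⟫) '' sphere (0 : EuclideanSpace ℝ (Fin n)) 1)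


lemma exists_unit (hn : 1 ≤ n) : ∃ u : EuclideanSpace ℝ (Fin n), ‖u‖ = 1 :=
  ⟨EuclideanSpace.single (⟨0, hn⟩ : Fin n) (1 : ℝ), by
    rw [EuclideanSpace.norm_single]; simp⟩

lemma sphere_ne (hn : 1 ≤ n) : (sphere (0 : EuclideanSpace ℝ (Fin n)) 1).Nonempty := by
  obtain ⟨u, hu⟩ := exists_unit hn
  exact ⟨u, by simpa [mem_sphere_zero_iff_norm] using hu⟩

lemma Fimg_bddBelow {K : Set (EuclideanSpace ℝ (Fin n))} (hne : K.Nonempty)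
    (hcp : IsCompact K) (p : EuclideanSpace ℝ (Fin n)) :
    BddBelow ((fun u => supF K u - ⟪u, p⟫) '' sphere (0 : EuclideanSpace ℝ (Fin n)) 1) := by
  obtain ⟨x₀, hx₀⟩ := hne
  refine ⟨-‖x₀ - p‖, ?_⟩
  rintro b ⟨u, hu, rfl⟩
  rw [mem_sphere_zero_iff_norm] at hu
  have h1 : ⟪u, x₀⟫ ≤ supF K u := le_supF hcp u hx₀
  have h2 : ⟪u, x₀⟫ - ⟪u, p⟫ = ⟪u, x₀ - p⟫ := (inner_sub_right u x₀ p).symm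
  have h3 : |⟪u, x₀ - p⟫| ≤ ‖u‖ * ‖x₀ - p‖ := abs_real_inner_le_norm _ _
  rw [hu, one_mul] at h3
  have := neg_abs_le (⟪u, x₀ - p⟫ : ℝ)
  simp only
  linarith

lemma Ffun_le {K : Set (EuclideanSpace ℝ (Fin n))} (hne : K.Nonempty)
    (hcp : IsCompact K) {p u : EuclideanSpace ℝ (Fin n)} (hu : ‖u‖ = 1) :
    Ffun K p ≤ supF K u - ⟪u, p⟫ :=
  csInf_le (Fimg_bddBelow hne hcp p) ⟨u, by rwa [mem_sphere_zero_iff_norm], rfl⟩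

lemma le_Ffun (hn : 1 ≤ n) {K : Set (EuclideanSpace ℝ (Fin n))}
    {p : EuclideanSpace ℝ (Fin n)} {a : ℝ}
    (h : ∀ u : EuclideanSpace ℝ (Fin n), ‖u‖ = 1 → a ≤ supF K u - ⟪u, p⟫) :
    a ≤ Ffun K p := by
  refine le_csInf ((sphere_ne hn).image _) ?_
  rintro b ⟨u, hu, rfl⟩
  exact h u (by rwa [mem_sphere_zero_iff_norm] at hu)


/-- If all supporting halfspaces leave room `ρ` around `p`, the closed ball fits inside `K`. -/
lemma ball_subset_of (hn : 1 ≤ n) {K : Set (EuclideanSpace ℝ (Fin n))} (hne : K.Nonempty)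
    (hcp : IsCompact K) (hcv : Convex ℝ K) {p : EuclideanSpace ℝ (Fin n)} {ρ : ℝ}
    (hρ : 0 ≤ ρ) (h : ∀ u : EuclideanSpace ℝ (Fin n), ‖u‖ = 1 → ⟪u, p⟫ + ρ ≤ supF K u) :
    closedBall p ρ ⊆ K := by
  intro x hx
  by_contra hxK
  obtain ⟨f, s, hfK, hsx⟩ := geometric_hahn_banach_closed_point hcv hcp.isClosed hxK
  set v := (InnerProductSpace.toDual ℝ (EuclideanSpace ℝ (Fin n))).symm f with hvdef
  have hv : ∀ y, ⟪v, y⟫ = f y := fun y => InnerProductSpace.toDual_symm_apply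
  obtain ⟨x₀, hx₀⟩ := hne
  have hv0 : v ≠ 0 := by
    intro h0
    have e1 : f x₀ = 0 := by rw [← hv, h0, inner_zero_left]
    have e2 : f x = 0 := by rw [← hv, h0, inner_zero_left]
    have := hfK x₀ hx₀
    linarith
  have hnv : (0:ℝ) < ‖v‖ := norm_pos_iff.mpr hv0
  set u := ‖v‖⁻¹ • v with hudef
  have hu : ‖u‖ = 1 := norm_smul_inv_norm hv0
  have hinner : ∀ y, ⟪u, y⟫ = ‖v‖⁻¹ * f y := by
    intro y; rw [hudef, real_inner_smul_left, hv]
  have h1 : supF K u ≤ ‖v‖⁻¹ * s := by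
    refine supF_le ⟨x₀, hx₀⟩ fun y hy => ?_
    rw [hinner]
    exact mul_le_mul_of_nonneg_left (hfK y hy).le (inv_nonneg.mpr hnv.le)
  have h2 : ‖v‖⁻¹ * s < ⟪u, x⟫ := by
    rw [hinner]
    exact mul_lt_mul_of_pos_left hsx (inv_pos.mpr hnv)
  have h3 : ⟪u, x⟫ ≤ ⟪u, p⟫ + ρ := by
    have e : ⟪u, x⟫ - ⟪u, p⟫ = ⟪u, x - p⟫ := (inner_sub_right u x p).symm
    have h4 : |⟪u, x - p⟫| ≤ ‖u‖ * ‖x - p‖ := abs_real_inner_le_norm _ _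
    rw [hu, one_mul] at h4
    have h5 : ‖x - p‖ ≤ ρ := by rwa [← dist_eq_norm, ← mem_closedBall]
    have := le_abs_self (⟪u, x - p⟫ : ℝ)
    linarith
  have := h u hu
  linarith

lemma le_Ffun_of_ball_subset (hn : 1 ≤ n) {K : Set (EuclideanSpace ℝ (Fin n))}
    (hcp : IsCompact K) {p : EuclideanSpace ℝ (Fin n)} {ρ : ℝ} (hρ : 0 ≤ ρ)
    (h : closedBall p ρ ⊆ K) : ρ ≤ Ffun K p := by
  refine le_Ffun hn fun u hu => ?_
  have hmem : p + ρ • u ∈ K := by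
    refine h ?_
    rw [mem_closedBall, dist_eq_norm]
    simp only [add_sub_cancel_left, norm_smul, hu, mul_one, Real.norm_eq_abs, abs_of_nonneg hρ]
    exact le_rfl
  have := le_supF hcp u hmem
  rw [inner_add_right, real_inner_smul_right, real_inner_self_eq_norm_mul_norm, hu] at this
  linarith

lemma Ffun_nonneg (hn : 1 ≤ n) {K : Set (EuclideanSpace ℝ (Fin n))} (hcp : IsCompact K)
    {p : EuclideanSpace ℝ (Fin n)} (hp : p ∈ K) : 0 ≤ Ffun K p :=
  le_Ffun hn fun u _ => by have := le_supF hcp u hp; linarith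

lemma Ffun_continuous (hn : 1 ≤ n) {K : Set (EuclideanSpace ℝ (Fin n))} (hne : K.Nonempty)
    (hcp : IsCompact K) : Continuous (Ffun K) := by
  have key : ∀ p q : EuclideanSpace ℝ (Fin n), Ffun K p ≤ Ffun K q + ‖p - q‖ := by
    intro p q
    have : Ffun K p - ‖p - q‖ ≤ Ffun K q := by
      refine le_Ffun hn fun u hu => ?_
      have h1 : Ffun K p ≤ supF K u - ⟪u, p⟫ := Ffun_le hne hcp hu
      have h2 : ⟪u, q⟫ - ⟪u, p⟫ = ⟪u, q - p⟫ := (inner_sub_right u q p).symm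
      have h3 : |⟪u, q - p⟫| ≤ ‖u‖ * ‖q - p‖ := abs_real_inner_le_norm _ _
      rw [hu, one_mul] at h3
      rw [norm_sub_rev] at h3
      have := le_abs_self (⟪u, q - p⟫ : ℝ)
      linarith
    linarith
  refine lipschitzWith_iff_dist_le_mul.mpr ?_ |>.continuous (K := 1)
  intro p q
  simp only [NNReal.coe_one, one_mul]
  rw [Real.dist_eq, abs_sub_le_iff, dist_eq_norm]
  constructor
  · have := key p q; linarith
  · have := key q p; rw [norm_sub_rev]; linarith


/-- Core lemma: there is an optimal inball center `p` and, for any vector `w`, a contact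
direction `u` (a unit vector whose supporting halfspace touches the inball) with `0 ≤ ⟪u, w⟫`. -/
lemma exists_contact_dir (hn : 1 ≤ n) {K : Set (EuclideanSpace ℝ (Fin n))} (hne : K.Nonempty)
    (hcp : IsCompact K) (hcv : Convex ℝ K) (c' : EuclideanSpace ℝ (Fin n)) :
    ∃ p u : EuclideanSpace ℝ (Fin n), p ∈ K ∧ ‖u‖ = 1 ∧
      supF K u - ⟪u, p⟫ = inradius K ∧ 0 ≤ ⟪u, c' - p⟫ := by
  classical
  obtain ⟨p, hpK, hmax⟩ := hcp.exists_isMaxOn hne (Ffun_continuous hn hne hcp).continuousOn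
  set w := c' - p with hwdef
  -- maximality over the whole space
  have hmaxall : ∀ q, Ffun K q ≤ Ffun K p := by
    intro q
    rcases le_or_gt (Ffun K q) 0 with h | h
    · exact h.trans (Ffun_nonneg hn hcp hpK)
    · have hq : q ∈ K := by
        have hball : closedBall q (Ffun K q) ⊆ K := by
          refine ball_subset_of hn hne hcp hcv h.le fun u hu => ?_
          have := Ffun_le hne hcp (p := q) hu
          linarith
        exact hball (mem_closedBall_self h.le)
      exact hmax hq
  -- inradius equals the max of Ffun
  have hrin : inradius K = Ffun K p := by
    have hub : ∀ ρ ∈ {ρ : ℝ | 0 ≤ ρ ∧ ∃ c, Metric.closedBall c ρ ⊆ K}, ρ ≤ Ffun K p := by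
      rintro ρ ⟨hρ, c, hc⟩
      exact (le_Ffun_of_ball_subset hn hcp hρ hc).trans (hmaxall c)
    have hmem : Ffun K p ∈ {ρ : ℝ | 0 ≤ ρ ∧ ∃ c, Metric.closedBall c ρ ⊆ K} := by
      refine ⟨Ffun_nonneg hn hcp hpK, p, ?_⟩
      refine ball_subset_of hn hne hcp hcv (Ffun_nonneg hn hcp hpK) fun u hu => ?_
      have := Ffun_le hne hcp (p := p) hu
      linarith
    refine le_antisymm (csSup_le ⟨_, hmem⟩ hub) (le_csSup ⟨Ffun K p, hub⟩ hmem)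
  set S := sphere (0 : EuclideanSpace ℝ (Fin n)) 1 with hSdef
  set g : EuclideanSpace ℝ (Fin n) → ℝ := fun u => supF K u - ⟪u, p⟫ with hgdef
  have hgcont : Continuous g :=
    (supF_continuous hne hcp).sub (continuous_id.inner continuous_const)
  have hgS : ∀ u ∈ S, Ffun K p ≤ g u := by
    intro u hu
    exact csInf_le (Fimg_bddBelow hne hcp p) ⟨u, hu, rfl⟩
  set N := S ∩ g ⁻¹' {Ffun K p} with hNdef
  obtain ⟨u₀, hu₀S, hu₀min⟩ :=
    (isCompact_sphere (0 : EuclideanSpace ℝ (Fin n)) 1).exists_isMinOn (sphere_ne hn)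
      hgcont.continuousOn
  have hgu₀ : g u₀ = Ffun K p := by
    refine le_antisymm ?_ (hgS u₀ hu₀S)
    refine le_csInf ((sphere_ne hn).image _) ?_
    rintro b ⟨u, hu, rfl⟩
    exact hu₀min hu
  have hu₀N : u₀ ∈ N := ⟨hu₀S, hgu₀⟩
  have hNcl : IsClosed N :=
    (isClosed_sphere).inter (isClosed_singleton.preimage hgcont)
  have hNcp : IsCompact N :=
    (isCompact_sphere (0 : EuclideanSpace ℝ (Fin n)) 1).of_isClosed_subset hNcl
      inter_subset_left
  -- Step 1: 0 is in the closed convex hull of the contact directions N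
  have hzero : (0 : EuclideanSpace ℝ (Fin n)) ∈ closure (convexHull ℝ N) := by
    by_contra h0
    obtain ⟨f, s, hf0, hfN⟩ :=
      geometric_hahn_banach_point_closed ((convex_convexHull ℝ N).closure) isClosed_closure h0
    have hs : 0 < s := by simpa using hf0
    set v := -((InnerProductSpace.toDual ℝ (EuclideanSpace ℝ (Fin n))).symm f) with hvdef
    have hvy : ∀ y, ⟪v, y⟫ = -f y := by
      intro y; rw [hvdef, inner_neg_left, InnerProductSpace.toDual_symm_apply]
    have hvN : ∀ u ∈ N, ⟪u, v⟫ < -s := by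
      intro u hu
      have : s < f u := hfN u (subset_closure (subset_convexHull ℝ N hu))
      rw [real_inner_comm, hvy]
      linarith
    have hv0 : v ≠ 0 := by
      intro hv
      have := hvN u₀ hu₀N
      rw [hv, inner_zero_right] at this
      linarith
    have hnv : (0:ℝ) < ‖v‖ := norm_pos_iff.mpr hv0
    set A := S ∩ {u | -s/2 ≤ ⟪u, v⟫} with hAdef
    have hAcl : IsClosed A :=
      isClosed_sphere.inter (isClosed_le continuous_const (continuous_id.inner continuous_const))
    have hAcp : IsCompact A :=
      (isCompact_sphere (0 : EuclideanSpace ℝ (Fin n)) 1).of_isClosed_subset hAcl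
        inter_subset_left
    have hAne : A.Nonempty := by
      refine ⟨‖v‖⁻¹ • v, ?_, ?_⟩
      · rw [hSdef, mem_sphere_zero_iff_norm]; exact norm_smul_inv_norm hv0
      · have : ⟪‖v‖⁻¹ • v, v⟫ = ‖v‖⁻¹ * (‖v‖ * ‖v‖) := by
          rw [real_inner_smul_left, real_inner_self_eq_norm_mul_norm]
        simp only [mem_setOf_eq, this]
        have : 0 < ‖v‖⁻¹ * (‖v‖ * ‖v‖) := by positivity
        linarith
    obtain ⟨u₁, hu₁A, hu₁min⟩ := hAcp.exists_isMinOn hAne hgcont.continuousOn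
    have hu₁notN : u₁ ∉ N := by
      intro hmem
      have h1 := hvN u₁ hmem
      have h2 := hu₁A.2
      simp only [mem_setOf_eq] at h2
      linarith
    have hη : Ffun K p < g u₁ := by
      rcases lt_or_eq_of_le (hgS u₁ hu₁A.1) with h | h
      · exact h
      · exact absurd ⟨hu₁A.1, h.symm⟩ hu₁notN
    set η := g u₁ - Ffun K p with hηdef
    have hηpos : 0 < η := by simp [hηdef]; linarith
    set t := η / (2 * (‖v‖ + 1)) with htdef
    have htpos : 0 < t := by positivity
    have htv : t * ‖v‖ < η := by
      rw [htdef]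
      rw [div_mul_eq_mul_div, div_lt_iff₀ (by positivity)]
      nlinarith
    set δ := min (η - t * ‖v‖) (t * s / 2) with hδdef
    have hδpos : 0 < δ := by
      apply lt_min
      · linarith
      · positivity
    have hkey : Ffun K p + δ ≤ Ffun K (p + t • v) := by
      refine le_Ffun hn fun u hu => ?_
      have hq : ⟪u, p + t • v⟫ = ⟪u, p⟫ + t * ⟪u, v⟫ := by
        rw [inner_add_right, real_inner_smul_right]
      have habs : |⟪u, v⟫| ≤ ‖v‖ := by
        have := abs_real_inner_le_norm u v
        rwa [hu, one_mul] at this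
      rcases le_or_gt (-s/2) ⟪u, v⟫ with hcase | hcase
      · have hgA : g u₁ ≤ g u := hu₁min ⟨by rwa [hSdef, mem_sphere_zero_iff_norm], hcase⟩
        have h1 : t * ⟪u, v⟫ ≤ t * ‖v‖ :=
          mul_le_mul_of_nonneg_left ((le_abs_self _).trans habs) htpos.le
        have h2 : δ ≤ η - t * ‖v‖ := min_le_left _ _
        have : supF K u - ⟪u, p + t • v⟫ = g u - t * ⟪u, v⟫ := by
          rw [hq, hgdef]; ring
        rw [this]
        have : g u₁ = Ffun K p + η := by rw [hηdef]; ring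
        linarith
      · have h1 : g u ≥ Ffun K p := hgS u (by rwa [hSdef, mem_sphere_zero_iff_norm])
        have h2 : δ ≤ t * s / 2 := min_le_right _ _
        have h3 : t * ⟪u, v⟫ < t * (-s/2) := by
          exact mul_lt_mul_of_pos_left hcase htpos
        have : supF K u - ⟪u, p + t • v⟫ = g u - t * ⟪u, v⟫ := by
          rw [hq, hgdef]; ring
        rw [this]
        nlinarith
    have := hmaxall (p + t • v)
    linarith
  -- Step 2: extract a contact direction making nonnegative inner product with w
  by_contra hcon
  push_neg at hcon
  have hneg : ∀ u ∈ N, ⟪u, w⟫ < 0 := by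
    intro u hu
    rcases lt_or_ge ⟪u, w⟫ 0 with h | h
    · exact h
    · exfalso
      have h1 : ‖u‖ = 1 := by
        have := hu.1
        rwa [hSdef, mem_sphere_zero_iff_norm] at this
      have h2 : supF K u - ⟪u, p⟫ = inradius K := by rw [hrin]; exact hu.2
      exact absurd h (not_le.mpr (by linarith [hcon p u hpK h1 h2]))
  have hwcont : Continuous (fun u : EuclideanSpace ℝ (Fin n) => (⟪u, w⟫ : ℝ)) :=
    continuous_id.inner continuous_const
  obtain ⟨u₂, hu₂N, hu₂max⟩ := hNcp.exists_isMaxOn ⟨u₀, hu₀N⟩ hwcont.continuousOn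
  set m := (⟪u₂, w⟫ : ℝ) with hmdef
  have hm : m < 0 := hneg u₂ hu₂N
  set H := {y : EuclideanSpace ℝ (Fin n) | ⟪y, w⟫ ≤ m} with hHdef
  have hHconv : Convex ℝ H := by
    refine convex_halfSpace_le ⟨fun a b => ?_, fun c x => ?_⟩ m
    · exact inner_add_left a b w
    · exact real_inner_smul_left x w c
  have hHcl : IsClosed H :=
    isClosed_le (continuous_id.inner continuous_const) continuous_const
  have hNH : N ⊆ H := fun u hu => hu₂max hu
  have h0H : (0 : EuclideanSpace ℝ (Fin n)) ∈ H :=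
    (closure_minimal ((convexHull_min hNH hHconv)) hHcl) hzero
  simp only [hHdef, mem_setOf_eq, inner_zero_left] at h0H
  linarith

end WidthAux

theorem width_le_inradius_add_circumradius_le_diam (n : ℕ) (hn : 1 ≤ n)
    (K : Set (EuclideanSpace ℝ (Fin n)))
    (hne : K.Nonempty) (hcp : IsCompact K) (hcv : Convex ℝ K) :
    width K ≤ inradius K + circumradius K ∧
      inradius K + circumradius K ≤ sDiam K := by
  classical
  obtain ⟨u₀, hu₀⟩ := WidthAux.exists_unit hn
  obtain ⟨x₀, hx₀⟩ := hne
  have hne : K.Nonempty := ⟨x₀, hx₀⟩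
  set cset := {ρ : ℝ | 0 ≤ ρ ∧ ∃ c, K ⊆ closedBall c ρ} with hcsetdef
  set rset := {ρ : ℝ | 0 ≤ ρ ∧ ∃ c, closedBall c ρ ⊆ K} with hrsetdef
  have hcset_ne : cset.Nonempty :=
    ⟨diam K, diam_nonneg, x₀, fun x hx =>
      mem_closedBall.mpr (dist_le_diam_of_mem hcp.isBounded hx hx₀)⟩
  have hcset_bdd : BddBelow cset := ⟨0, fun ρ h => h.1⟩
  have hrset_ne : rset.Nonempty := by
    refine ⟨0, le_rfl, x₀, ?_⟩
    rw [closedBall_zero]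
    exact singleton_subset_iff.mpr hx₀
  -- Part 2 : inradius + circumradius ≤ diam
  have part2 : inradius K + circumradius K ≤ sDiam K := by
    have key : ∀ ρ ∈ rset, ρ + circumradius K ≤ diam K := by
      rintro ρ ⟨hρ, c, hc⟩
      have hmem : ∀ u : EuclideanSpace ℝ (Fin n), ‖u‖ = 1 → c + ρ • u ∈ K := by
        intro u hu
        refine hc ?_
        rw [mem_closedBall, dist_eq_norm]
        simp only [add_sub_cancel_left, norm_smul, hu, mul_one, Real.norm_eq_abs,
          abs_of_nonneg hρ]
        exact le_rfl
      have h2ρ : 2 * ρ ≤ diam K := by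
        have h1 := hmem u₀ hu₀
        have h2 := hmem (-u₀) (by rwa [norm_neg])
        have := dist_le_diam_of_mem hcp.isBounded h1 h2
        rw [dist_eq_norm] at this
        have he : c + ρ • u₀ - (c + ρ • (-u₀)) = (2 * ρ) • u₀ := by module
        rw [he, norm_smul, hu₀, mul_one, Real.norm_eq_abs, abs_of_nonneg (by linarith)] at this
        exact this
      have hsub : K ⊆ closedBall c (diam K - ρ) := by
        intro x hx
        rcases eq_or_ne x c with rfl | hxc
        · rw [mem_closedBall, dist_self]
          linarith
        · have hd : (0:ℝ) < ‖c - x‖ := by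
            rw [norm_pos_iff, sub_ne_zero]
            exact fun h => hxc h.symm
          set u := ‖c - x‖⁻¹ • (c - x) with hudef
          have hu : ‖u‖ = 1 := norm_smul_inv_norm (by rw [sub_ne_zero]; exact fun h => hxc h.symm)
          have hmemu := hmem u hu
          have hdist := dist_le_diam_of_mem hcp.isBounded hx hmemu
          rw [dist_eq_norm] at hdist
          have he : x - (c + ρ • u) = -((1 + ρ * ‖c - x‖⁻¹) • (c - x)) := by
            rw [hudef]; module
          rw [he, norm_neg, norm_smul, Real.norm_eq_abs,
            abs_of_nonneg (by positivity)] at hdist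
          have hexp : (1 + ρ * ‖c - x‖⁻¹) * ‖c - x‖ = ‖c - x‖ + ρ := by
            field_simp
          rw [hexp] at hdist
          rw [mem_closedBall, dist_eq_norm, ← norm_sub_rev]
          linarith
      have hDρ : diam K - ρ ∈ cset := ⟨by linarith, c, hsub⟩
      have := csInf_le hcset_bdd hDρ
      have hci : circumradius K = sInf cset := rfl
      rw [← hci] at this
      linarith
    have hub : ∀ ρ ∈ rset, ρ ≤ diam K - circumradius K := by
      intro ρ h
      have := key ρ h
      linarith
    have := csSup_le hrset_ne hub
    have hri : inradius K = sSup rset := rfl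
    rw [← hri] at this
    show inradius K + circumradius K ≤ diam K
    linarith
  -- Part 1 : width ≤ inradius + circumradius
  have part1 : width K ≤ inradius K + circumradius K := by
    set wset := {b : ℝ | ∃ u : EuclideanSpace ℝ (Fin n), ‖u‖ = 1 ∧
      b = sSup ((fun x => (inner ℝ u x : ℝ)) '' K) - sInf ((fun x => (inner ℝ u x : ℝ)) '' K)}
      with hwsetdef
    have hwbdd : BddBelow wset := by
      refine ⟨0, ?_⟩
      rintro b ⟨u, hu, rfl⟩
      have h1 : ((fun x => (inner ℝ u x : ℝ)) '' K).Nonempty := WidthAux.img_ne hne u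
      have h2 := WidthAux.img_compact hcp u
      have := csInf_le_csSup h1 h2.bddBelow h2.bddAbove
      linarith
    have key : ∀ ρ' ∈ cset, width K ≤ inradius K + ρ' := by
      rintro ρ' ⟨hρ', c', hc'⟩
      obtain ⟨p, u, hpK, hu, heq, hw⟩ := WidthAux.exists_contact_dir hn hne hcp hcv c'
      have hb : (sSup ((fun x => (inner ℝ u x : ℝ)) '' K) -
          sInf ((fun x => (inner ℝ u x : ℝ)) '' K)) ∈ wset := ⟨u, hu, rfl⟩
      have hwle : width K ≤ sSup ((fun x => (inner ℝ u x : ℝ)) '' K) -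
          sInf ((fun x => (inner ℝ u x : ℝ)) '' K) := csInf_le hwbdd hb
      have hsup : sSup ((fun x => (inner ℝ u x : ℝ)) '' K) = inradius K + ⟪u, p⟫ := by
        have : WidthAux.supF K u = inradius K + ⟪u, p⟫ := by
          have := heq; unfold WidthAux.supF at *; linarith
        exact this
      have hinf : ⟪u, c'⟫ - ρ' ≤ sInf ((fun x => (inner ℝ u x : ℝ)) '' K) := by
        refine le_csInf (WidthAux.img_ne hne u) ?_
        rintro b ⟨x, hx, rfl⟩
        have hdist : ‖x - c'‖ ≤ ρ' := by
          have := hc' hx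
          rwa [mem_closedBall, dist_eq_norm] at this
        have he : ⟪u, x⟫ - ⟪u, c'⟫ = ⟪u, x - c'⟫ := (inner_sub_right u x c').symm
        have habs : |⟪u, x - c'⟫| ≤ ‖x - c'‖ := by
          have := abs_real_inner_le_norm u (x - c')
          rwa [hu, one_mul] at this
        have := neg_abs_le (⟪u, x - c'⟫ : ℝ)
        simp only
        linarith
      have hiw : ⟪u, c' - p⟫ = ⟪u, c'⟫ - ⟪u, p⟫ := inner_sub_right u c' p
      rw [hiw] at hw
      linarith
    have hub : ∀ ρ' ∈ cset, width K - inradius K ≤ ρ' := by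
      intro ρ' h
      have := key ρ' h
      linarith
    have := le_csInf hcset_ne hub
    have hci : circumradius K = sInf cset := rfl
    rw [← hci] at this
    linarith
  exact ⟨part1, part2⟩
end

section
/- (Jung's inequality in the plane) For every convex body K in the Euclidean plane ℝ² one has √3·R(K) ≤ D(K). -/
open Metric Set
open scoped RealInnerProductSpace

/-- Existence of an optimal enclosing center for a compact nonempty set. -/
lemma exists_opt_center {n : ℕ} (K : Set (EuclideanSpace ℝ (Fin n)))
    (hne : K.Nonempty) (hcp : IsCompact K) :
    ∃ c₀ R : _, 0 ≤ R ∧ K ⊆ closedBall c₀ R ∧ ∀ c, ∃ x ∈ K, R ≤ dist x c := by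
  set f : EuclideanSpace ℝ (Fin n) → ℝ := fun c => sSup ((fun x => dist x c) '' K) with hf
  have himg : ∀ c, IsCompact ((fun x => dist x c) '' K) :=
    fun c => hcp.image (continuous_id.dist continuous_const)
  have hne' : ∀ c, ((fun x => dist x c) '' K).Nonempty := fun c => hne.image _
  have hmem : ∀ c, ∃ x ∈ K, dist x c = f c := by
    intro c
    have := (himg c).sSup_mem (hne' c)
    simpa using this
  have hub : ∀ c, ∀ x ∈ K, dist x c ≤ f c :=
    fun c x hx => le_csSup (himg c).bddAbove ⟨x, hx, rfl⟩
  have hcont : Continuous f := by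
    have hlip : ∀ c c', f c ≤ f c' + dist c c' := by
      intro c c'
      obtain ⟨x, hxK, hxc⟩ := hmem c
      calc f c = dist x c := hxc.symm
        _ ≤ dist x c' + dist c' c := dist_triangle _ _ _
        _ ≤ f c' + dist c c' := by
            have := hub c' x hxK; rw [dist_comm c' c]; linarith
    have : LipschitzWith 1 f := by
      refine LipschitzWith.of_dist_le_mul fun c c' => ?_
      rw [Real.dist_eq, abs_sub_le_iff]
      constructor
      · have := hlip c c'; simp only [NNReal.coe_one, one_mul]; linarith
      · have := hlip c' c; rw [dist_comm c' c] at this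
        simp only [NNReal.coe_one, one_mul]; linarith
    exact this.continuous
  obtain ⟨x₀, hx₀⟩ := hne
  have hf0 : 0 ≤ f x₀ := le_trans dist_nonneg (hub x₀ x₀ hx₀)
  obtain ⟨c₀, hc₀B, hc₀min⟩ := (isCompact_closedBall x₀ (f x₀)).exists_isMinOn
    ⟨x₀, mem_closedBall_self hf0⟩ hcont.continuousOn
  have hglobal : ∀ c, f c₀ ≤ f c := by
    intro c
    by_cases hc : c ∈ closedBall x₀ (f x₀)
    · exact hc₀min hc
    · have h1 : f x₀ < dist c x₀ := by
        simpa [mem_closedBall] using hc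
      have h2 : dist x₀ c ≤ f c := hub c x₀ hx₀
      have h3 : f c₀ ≤ f x₀ := hc₀min (mem_closedBall_self hf0)
      rw [dist_comm] at h2
      linarith
  refine ⟨c₀, f c₀, le_trans dist_nonneg (hub c₀ x₀ hx₀), ?_, ?_⟩
  · exact fun x hx => mem_closedBall.2 (hub c₀ x hx)
  · intro c
    obtain ⟨x, hxK, hxc⟩ := hmem c
    exact ⟨x, hxK, by rw [hxc]; exact hglobal c⟩


lemma exists_touch_nonpos_inner {n : ℕ} {K : Set (EuclideanSpace ℝ (Fin n))}
    (hcp : IsCompact K) {c₀ : EuclideanSpace ℝ (Fin n)} {R : ℝ} (hR : 0 < R)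
    (hsub : K ⊆ closedBall c₀ R) (hmin : ∀ c, ∃ x ∈ K, R ≤ dist x c)
    (u : EuclideanSpace ℝ (Fin n)) :
    ∃ x ∈ K, dist x c₀ = R ∧ ⟪u, x - c₀⟫ ≤ 0 := by
  by_contra hcon
  push_neg at hcon
  -- the touching set
  set T : Set (EuclideanSpace ℝ (Fin n)) := K ∩ {x | R ≤ dist x c₀} with hT
  have hTsub : T ⊆ K := inter_subset_left
  have hTdist : ∀ x ∈ T, dist x c₀ = R := fun x hx =>
    le_antisymm (mem_closedBall.1 (hsub hx.1)) hx.2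
  have hTne : T.Nonempty := by
    obtain ⟨x, hxK, hxR⟩ := hmin c₀
    exact ⟨x, hxK, hxR⟩
  have hTcp : IsCompact T :=
    hcp.inter_right (isClosed_le continuous_const (continuous_id.dist continuous_const))
  have hpos : ∀ x ∈ T, 0 < ⟪u, x - c₀⟫ := fun x hx =>
    hcon x (hTsub hx) (hTdist x hx)
  have hgcont : Continuous fun x : EuclideanSpace ℝ (Fin n) => ⟪u, x - c₀⟫ :=
    Continuous.inner continuous_const (continuous_id.sub continuous_const)
  obtain ⟨x₁, hx₁T, hx₁min⟩ := hTcp.exists_isMinOn hTne hgcont.continuousOn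
  set δ : ℝ := ⟪u, x₁ - c₀⟫ with hδ
  have hδpos : 0 < δ := hpos x₁ hx₁T
  have hune : u ≠ 0 := by
    rintro rfl
    rw [hδ, inner_zero_left] at hδpos
    exact lt_irrefl 0 hδpos
  have hu : 0 < ‖u‖ := norm_pos_iff.2 hune
  set K' : Set (EuclideanSpace ℝ (Fin n)) := K ∩ {x | ⟪u, x - c₀⟫ ≤ δ / 2} with hK'
  have hK'cp : IsCompact K' := hcp.inter_right (isClosed_le hgcont continuous_const)
  have hK'lt : ∀ x ∈ K', dist x c₀ < R := by
    intro x hx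
    rcases lt_or_eq_of_le (mem_closedBall.1 (hsub hx.1)) with h | h
    · exact h
    · exfalso
      have hxT : x ∈ T := ⟨hx.1, h.ge⟩
      have := hx₁min hxT
      have := hx.2
      simp only [mem_setOf_eq] at *
      linarith
  obtain ⟨R', hR'lt, hR'bd⟩ : ∃ R', R' < R ∧ ∀ x ∈ K', dist x c₀ ≤ R' := by
    rcases K'.eq_empty_or_nonempty with h | h
    · exact ⟨0, hR, by simp [h]⟩
    · obtain ⟨x₂, hx₂, hx₂max⟩ := hK'cp.exists_isMaxOn h
        ((continuous_id.dist continuous_const).continuousOn)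
      exact ⟨dist x₂ c₀, hK'lt x₂ hx₂, fun x hx => hx₂max hx⟩
  set t : ℝ := min ((R - R') / (2 * ‖u‖)) (δ / (2 * ‖u‖ ^ 2)) with ht
  have htpos : 0 < t := lt_min (div_pos (by linarith) (by positivity)) (by positivity)
  set c : EuclideanSpace ℝ (Fin n) := c₀ + t • u with hc
  have key : ∀ x ∈ K, dist x c < R := by
    intro x hx
    by_cases hgx : ⟪u, x - c₀⟫ ≤ δ / 2
    · have hx' : x ∈ K' := ⟨hx, hgx⟩
      have h1 : dist x c ≤ dist x c₀ + dist c₀ c := dist_triangle _ _ _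
      have h2 : dist c₀ c = t * ‖u‖ := by
        rw [hc, dist_self_add_right, norm_smul, Real.norm_eq_abs, abs_of_pos htpos]
      have h3 : t * ‖u‖ ≤ (R - R') / 2 := by
        have : t ≤ (R - R') / (2 * ‖u‖) := min_le_left _ _
        calc t * ‖u‖ ≤ (R - R') / (2 * ‖u‖) * ‖u‖ := by
              exact mul_le_mul_of_nonneg_right this (norm_nonneg u)
          _ = (R - R') / 2 := by field_simp
      have h4 := hR'bd x hx'
      linarith
    · push_neg at hgx
      have hd2 : dist x c ^ 2 < R ^ 2 := by
        have hexp : dist x c ^ 2 =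
            ‖x - c₀‖ ^ 2 - 2 * (t * ⟪u, x - c₀⟫) + t ^ 2 * ‖u‖ ^ 2 := by
          rw [dist_eq_norm, hc]
          have h6 : x - (c₀ + t • u) = (x - c₀) - t • u := by abel
          rw [h6, norm_sub_sq_real, real_inner_smul_right,
            norm_smul, Real.norm_eq_abs, abs_of_pos htpos, mul_pow,
            real_inner_comm (x - c₀) u]
        have hb1 : ‖x - c₀‖ ^ 2 ≤ R ^ 2 := by
          have : ‖x - c₀‖ ≤ R := by rw [← dist_eq_norm]; exact mem_closedBall.1 (hsub hx)
          exact pow_le_pow_left₀ (norm_nonneg _) this 2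
        have hb2 : t ^ 2 * ‖u‖ ^ 2 ≤ t * (δ / 2) := by
          have h5 : t ≤ δ / (2 * ‖u‖ ^ 2) := min_le_right _ _
          have : t * ‖u‖ ^ 2 ≤ δ / 2 := by
            calc t * ‖u‖ ^ 2 ≤ δ / (2 * ‖u‖ ^ 2) * ‖u‖ ^ 2 :=
                  mul_le_mul_of_nonneg_right h5 (by positivity)
              _ = δ / 2 := by field_simp
          calc t ^ 2 * ‖u‖ ^ 2 = t * (t * ‖u‖ ^ 2) := by ring
            _ ≤ t * (δ / 2) := mul_le_mul_of_nonneg_left this htpos.le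
        have hb3 : t * (δ / 2) < t * ⟪u, x - c₀⟫ :=
          mul_lt_mul_of_pos_left hgx htpos
        nlinarith
      exact lt_of_pow_lt_pow_left₀ 2 hR.le hd2
  obtain ⟨x, hxK, hxR⟩ := hmin c
  exact absurd (key x hxK) (not_lt.2 hxR)
-- distance lower bound from inner product upper bound
lemma dist_ge_of_inner {n : ℕ} {c₀ x y : EuclideanSpace ℝ (Fin n)} {R : ℝ}
    (hR : 0 ≤ R) (hx : dist x c₀ = R) (hy : dist y c₀ = R)
    (h : ⟪x - c₀, y - c₀⟫ ≤ -(R ^ 2 / 2)) :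
    Real.sqrt 3 * R ≤ dist x y := by
  have hxn : ‖x - c₀‖ = R := by rw [← dist_eq_norm]; exact hx
  have hyn : ‖y - c₀‖ = R := by rw [← dist_eq_norm]; exact hy
  have hsq : 3 * R ^ 2 ≤ dist x y ^ 2 := by
    have h1 : dist x y = ‖(x - c₀) - (y - c₀)‖ := by
      rw [dist_eq_norm]; congr 1; abel
    rw [h1, norm_sub_sq_real, hxn, hyn]
    linarith
  have h2 : Real.sqrt 3 * R = Real.sqrt (3 * R ^ 2) := by
    rw [Real.sqrt_mul (by norm_num : (0:ℝ) ≤ 3), Real.sqrt_sq hR]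
  rw [h2]
  calc Real.sqrt (3 * R ^ 2) ≤ Real.sqrt (dist x y ^ 2) := Real.sqrt_le_sqrt hsq
    _ = dist x y := Real.sqrt_sq dist_nonneg

-- arithmetic core
lemma jung_arith {r c e0 e1 : ℝ} (hr : 0 < r) (hc1 : -(r/2) < c) (hc2 : c ≤ 0)
    (hG : r*(r^2-c^2) - r*e0^2 - r*e1^2 + 2*c*e0*e1 = 0)
    (hsum : e0 + e1 ≤ 0)
    (h0 : -(r/2) < e0) (h1 : -(r/2) < e1) : False := by
  nlinarith [mul_nonneg (mul_nonneg (by linarith : (0:ℝ) ≤ c + r/2) (by linarith : (0:ℝ) ≤ -e0-e1)) hr.le,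
    mul_nonneg (mul_nonneg (by linarith : (0:ℝ) ≤ c + r/2) (by linarith : (0:ℝ) ≤ -c)) hr.le,
    mul_pos (mul_pos (by linarith : (0:ℝ) < c + r/2) (by linarith : (0:ℝ) < e0 + r/2)) (by linarith : (0:ℝ) < e1 + r/2),
    mul_nonneg (mul_nonneg hr.le (by linarith : (0:ℝ) ≤ e0 + r/2)) (by linarith : (0:ℝ) ≤ e0 + r/2),
    mul_nonneg (mul_nonneg hr.le (by linarith : (0:ℝ) ≤ e1 + r/2)) (by linarith : (0:ℝ) ≤ e1 + r/2),
    mul_nonneg (mul_nonneg hr.le (by linarith : (0:ℝ) ≤ e0 + r/2)) (by linarith : (0:ℝ) ≤ e1 + r/2),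
    mul_nonneg (mul_nonneg hr.le (by linarith : (0:ℝ) ≤ -e0-e1)) (by linarith : (0:ℝ) ≤ e0 + r/2),
    mul_nonneg (mul_nonneg hr.le (by linarith : (0:ℝ) ≤ -e0-e1)) (by linarith : (0:ℝ) ≤ e1 + r/2)]

lemma exists_far_pair {K : Set (EuclideanSpace ℝ (Fin 2))}
    (hcp : IsCompact K) {c₀ : EuclideanSpace ℝ (Fin 2)} {R : ℝ} (hR : 0 < R)
    (hsub : K ⊆ closedBall c₀ R) (hmin : ∀ c, ∃ x ∈ K, R ≤ dist x c) :
    ∃ x ∈ K, ∃ y ∈ K, Real.sqrt 3 * R ≤ dist x y := by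
  obtain ⟨x₀, hx₀K, hx₀R, -⟩ := exists_touch_nonpos_inner hcp hR hsub hmin 0
  set v₀ : EuclideanSpace ℝ (Fin 2) := x₀ - c₀ with hv₀def
  obtain ⟨x₁, hx₁K, hx₁R, h01⟩ := exists_touch_nonpos_inner hcp hR hsub hmin v₀
  set v₁ : EuclideanSpace ℝ (Fin 2) := x₁ - c₀ with hv₁def
  by_cases hcase : ⟪v₀, v₁⟫ ≤ -(R ^ 2 / 2)
  · exact ⟨x₀, hx₀K, x₁, hx₁K, dist_ge_of_inner hR.le hx₀R hx₁R hcase⟩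
  push_neg at hcase
  obtain ⟨x₂, hx₂K, hx₂R, h2⟩ := exists_touch_nonpos_inner hcp hR hsub hmin (v₀ + v₁)
  set v₂ : EuclideanSpace ℝ (Fin 2) := x₂ - c₀ with hv₂def
  have hv₀ : ⟪v₀, v₀⟫ = R ^ 2 := by
    rw [real_inner_self_eq_norm_sq, ← dist_eq_norm, hx₀R]
  have hv₁ : ⟪v₁, v₁⟫ = R ^ 2 := by
    rw [real_inner_self_eq_norm_sq, ← dist_eq_norm, hx₁R]
  have hv₂ : ⟪v₂, v₂⟫ = R ^ 2 := by
    rw [real_inner_self_eq_norm_sq, ← dist_eq_norm, hx₂R]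
  set cc : ℝ := ⟪v₀, v₁⟫ with hcc
  have hli : LinearIndependent ℝ ![v₀, v₁] := by
    rw [LinearIndependent.pair_iff]
    intro s t hst
    have hcomm : ⟪v₁, v₀⟫ = cc := by rw [hcc]; exact real_inner_comm v₀ v₁
    have he1 : s * R ^ 2 + t * cc = 0 := by
      have h : ⟪v₀, s • v₀ + t • v₁⟫ = ⟪v₀, (0 : EuclideanSpace ℝ (Fin 2))⟫ := by rw [hst]
      rw [inner_add_right, real_inner_smul_right, real_inner_smul_right, hv₀,
        inner_zero_right, ← hcc] at h
      exact h
    have he2 : s * cc + t * R ^ 2 = 0 := by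
      have h : ⟪v₁, s • v₀ + t • v₁⟫ = ⟪v₁, (0 : EuclideanSpace ℝ (Fin 2))⟫ := by rw [hst]
      rw [inner_add_right, real_inner_smul_right, real_inner_smul_right, hv₁,
        inner_zero_right, hcomm] at h
      exact h
    have hRpos : 0 < R ^ 2 := by positivity
    have hpos4 : 0 < (R ^ 2) ^ 2 - cc ^ 2 := by nlinarith [hcase, h01, hRpos]
    have hs : s * ((R ^ 2) ^ 2 - cc ^ 2) = 0 := by linear_combination R ^ 2 * he1 - cc * he2
    have ht : t * ((R ^ 2) ^ 2 - cc ^ 2) = 0 := by linear_combination R ^ 2 * he2 - cc * he1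
    have hs0 : s = 0 := by
      rcases mul_eq_zero.1 hs with h | h
      · exact h
      · exact absurd h (by linarith)
    have ht0 : t = 0 := by
      rcases mul_eq_zero.1 ht with h | h
      · exact h
      · exact absurd h (by linarith)
    exact ⟨hs0, ht0⟩
  have hspan : Submodule.span ℝ (Set.range ![v₀, v₁]) = ⊤ :=
    hli.span_eq_top_of_card_eq_finrank (by simp [finrank_euclideanSpace_fin])
  have hv₂mem : v₂ ∈ Submodule.span ℝ ({v₀, v₁} : Set (EuclideanSpace ℝ (Fin 2))) := by
    have hrange : Set.range ![v₀, v₁] = {v₀, v₁} := by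
      ext w; simp [Fin.exists_fin_two, or_comm]
    rw [← hrange, hspan]; trivial
  obtain ⟨α, β, hαβ⟩ := Submodule.mem_span_pair.1 hv₂mem
  set e0 : ℝ := ⟪v₀, v₂⟫ with he0def
  set e1 : ℝ := ⟪v₁, v₂⟫ with he1def
  have hcomm : ⟪v₁, v₀⟫ = cc := by rw [hcc]; exact real_inner_comm v₀ v₁
  have he0 : e0 = α * R ^ 2 + β * cc := by
    rw [he0def, ← hαβ, inner_add_right, real_inner_smul_right, real_inner_smul_right,
      hv₀, ← hcc]
  have he1 : e1 = α * cc + β * R ^ 2 := by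
    rw [he1def, ← hαβ, inner_add_right, real_inner_smul_right, real_inner_smul_right,
      hv₁, hcomm]
  have hG : α * e0 + β * e1 = R ^ 2 := by
    rw [he0def, he1def, ← hv₂]
    nth_rewrite 3 [← hαβ]
    rw [inner_add_left, real_inner_smul_left, real_inner_smul_left]
  have hc2 : cc ≤ 0 := h01
  have hsum : e0 + e1 ≤ 0 := by
    have : ⟪v₀ + v₁, v₂⟫ = e0 + e1 := by rw [inner_add_left, he0def, he1def]
    linarith [h2, this.symm.trans_le h2]
  by_cases h0 : e0 ≤ -(R ^ 2 / 2)
  · exact ⟨x₀, hx₀K, x₂, hx₂K, dist_ge_of_inner hR.le hx₀R hx₂R h0⟩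
  by_cases h1 : e1 ≤ -(R ^ 2 / 2)
  · exact ⟨x₁, hx₁K, x₂, hx₂K, dist_ge_of_inner hR.le hx₁R hx₂R h1⟩
  push_neg at h0 h1
  exfalso
  have hGram : R ^ 2 * ((R ^ 2) ^ 2 - cc ^ 2) - R ^ 2 * e0 ^ 2 - R ^ 2 * e1 ^ 2
      + 2 * cc * e0 * e1 = 0 := by
    rw [he0, he1] at hG ⊢
    linear_combination (cc ^ 2 - (R ^ 2) ^ 2) * hG
  exact jung_arith (by positivity : (0:ℝ) < R ^ 2) hcase hc2 hGram hsum h0 h1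

theorem jung_plane (K : Set (EuclideanSpace ℝ (Fin 2)))
    (hne : K.Nonempty) (hcp : IsCompact K) (hcv : Convex ℝ K) :
    Real.sqrt 3 * circumradius K ≤ sDiam K := by
  obtain ⟨c₀, R, hR0, hsub, hmin⟩ := exists_opt_center K hne hcp
  have hcirc : circumradius K ≤ R := csInf_le ⟨0, fun ρ hρ => hρ.1⟩ ⟨hR0, c₀, hsub⟩
  have hstep : Real.sqrt 3 * R ≤ sDiam K := by
    rcases eq_or_lt_of_le hR0 with h | h
    · rw [← h, mul_zero]
      exact Metric.diam_nonneg
    · obtain ⟨x, hxK, y, hyK, hxy⟩ := exists_far_pair hcp h hsub hmin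
      exact le_trans hxy (Metric.dist_le_diam_of_mem hcp.isBounded hxK hyK)
  calc Real.sqrt 3 * circumradius K ≤ Real.sqrt 3 * R :=
        mul_le_mul_of_nonneg_left hcirc (Real.sqrt_nonneg 3)
    _ ≤ sDiam K := hstep
end

section
/- (Jung's inequality) For every convex body K in Euclidean n-space ℝⁿ (n ≥ 1) one has R(K) ≤ √( n / (2(n+1)) ) · D(K). -/
open Metric Set
open scoped RealInnerProductSpace

open Finset

set_option maxHeartbeats 2000000 in
lemma jung_fin (n : ℕ) {ι : Type*} [Fintype ι] [Nonempty ι]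
    (hcard : Fintype.card ι ≤ n + 1) (p : ι → EuclideanSpace ℝ (Fin n))
    {d : ℝ} (hd : ∀ i j, dist (p i) (p j) ≤ d) :
    ∃ c, ∀ i, dist (p i) c ≤ Real.sqrt ((n : ℝ) / (2 * ((n : ℝ) + 1))) * d := by
  classical
  have hd0 : 0 ≤ d := le_trans (by simp) (hd (Classical.arbitrary ι) (Classical.arbitrary ι))
  set g : (ι → ℝ) → ℝ := fun w => (∑ i, w i * ‖p i‖ ^ 2) - ‖∑ i, w i • p i‖ ^ 2 with hg_def
  have hg_cont : Continuous g := by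
    apply Continuous.sub
    · exact continuous_finset_sum _ fun i _ => (continuous_apply i).mul continuous_const
    · exact (Continuous.norm (continuous_finset_sum _ fun i _ =>
        (continuous_apply i).smul continuous_const)).pow 2
  obtain ⟨w, hwS, hmax⟩ := (isCompact_stdSimplex ℝ ι).exists_isMaxOn
    ⟨_, ite_eq_mem_stdSimplex ℝ (Classical.arbitrary ι)⟩ hg_cont.continuousOn
  have hw0 : ∀ i, 0 ≤ w i := hwS.1
  have hw1 : ∑ i, w i = 1 := hwS.2
  set c : EuclideanSpace ℝ (Fin n) := ∑ i, w i • p i with hc_def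
  set S : ℝ := ∑ i, w i * ‖p i‖ ^ 2 with hS_def
  have hgw : g w = S - ‖c‖ ^ 2 := rfl
  have hvert : ∀ i : ι, g (fun j => if i = j then 1 else 0) = 0 := by
    intro i
    have h1 : (∑ j, (if i = j then (1:ℝ) else 0) * ‖p j‖ ^ 2) = ‖p i‖ ^ 2 := by
      simp [ite_mul, Finset.sum_ite_eq]
    have h2 : (∑ j, (if i = j then (1:ℝ) else 0) • p j) = p i := by
      simp [ite_smul, Finset.sum_ite_eq]
    simp [hg_def, h1, h2]
  have hgw0 : 0 ≤ g w := by
    have := hmax (ite_eq_mem_stdSimplex ℝ (Classical.arbitrary ι))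
    simpa [hvert (Classical.arbitrary ι)] using this
  have key : ∀ i, ‖p i - c‖ ^ 2 ≤ g w := by
    intro i
    by_contra hlt
    push_neg at hlt
    set Q : ℝ := ‖p i - c‖ ^ 2 with hQ_def
    have hQpos : 0 < Q := lt_of_le_of_lt hgw0 hlt
    set t : ℝ := (Q - g w) / (2 * Q) with ht_def
    have ht0 : 0 < t := div_pos (by linarith) (by linarith)
    have ht1 : t ≤ 1 := by rw [div_le_one (by linarith)]; linarith
    have htQ : 2 * Q * t = Q - g w := by
      rw [ht_def]; field_simp
    set wt : ι → ℝ := fun j => (1 - t) * w j + t * (if i = j then 1 else 0) with hwt_def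
    have hwtS : wt ∈ stdSimplex ℝ ι := by
      constructor
      · intro j
        have := hw0 j
        dsimp [wt]; split <;> nlinarith
      · simp [wt, Finset.sum_add_distrib, ← Finset.mul_sum, hw1, Finset.sum_ite_eq]
    have hle : g wt ≤ g w := hmax hwtS
    have hsum1 : (∑ j, wt j * ‖p j‖ ^ 2) = (1 - t) * S + t * ‖p i‖ ^ 2 := by
      simp only [hwt_def, add_mul, Finset.sum_add_distrib, mul_assoc, ← Finset.mul_sum,
        ite_mul, one_mul, zero_mul, Finset.sum_ite_eq, Finset.mem_univ, if_true, hS_def]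
    have hsum2 : (∑ j, wt j • p j) = c + t • (p i - c) := by
      simp only [hwt_def, add_smul, Finset.sum_add_distrib, mul_smul, ← Finset.smul_sum,
        ite_smul, one_smul, zero_smul, Finset.sum_ite_eq, Finset.mem_univ, if_true, ← hc_def]
      rw [smul_sub, sub_smul, one_smul]
      abel
    have hnorm : ‖c + t • (p i - c)‖ ^ 2 = ‖c‖ ^ 2 + 2 * (t * ⟪c, p i - c⟫) + t ^ 2 * Q := by
      rw [norm_add_sq_real, real_inner_smul_right, norm_smul, mul_pow, hQ_def]
      simp [Real.norm_eq_abs, sq_abs]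
    have hinner : ⟪c, p i - c⟫ = ⟪p i, c⟫ - ‖c‖ ^ 2 := by
      rw [inner_sub_right, real_inner_self_eq_norm_sq, real_inner_comm]
    have hQexp : Q = ‖p i‖ ^ 2 - 2 * ⟪p i, c⟫ + ‖c‖ ^ 2 := norm_sub_sq_real _ _
    have hgwt : g wt = (1 - t) * S + t * ‖p i‖ ^ 2
        - (‖c‖ ^ 2 + 2 * (t * ⟪c, p i - c⟫) + t ^ 2 * Q) := by
      rw [hg_def]; dsimp only; rw [hsum1, hsum2, hnorm]
    rw [hgwt, hgw] at hle
    have e3 : t * Q = t * ‖p i‖ ^ 2 - 2 * (t * ⟪p i, c⟫) + t * ‖c‖ ^ 2 := by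
      rw [hQ_def, norm_sub_sq_real]; ring
    have e4 : t * ⟪c, p i - c⟫ = t * ⟪p i, c⟫ - t * ‖c‖ ^ 2 := by rw [hinner]; ring
    have h5 : t * (Q - (S - ‖c‖ ^ 2) - t * Q) ≤ 0 := by
      have expand : t * (Q - (S - ‖c‖ ^ 2) - t * Q)
          = ((1 - t) * S + t * ‖p i‖ ^ 2
            - (‖c‖ ^ 2 + 2 * (t * ⟪c, p i - c⟫) + t ^ 2 * Q)) - (S - ‖c‖ ^ 2)
            + (t * Q - (t * ‖p i‖ ^ 2 - 2 * (t * ⟪p i, c⟫) + t * ‖c‖ ^ 2))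
            + 2 * ((t * ⟪c, p i - c⟫) - (t * ⟪p i, c⟫ - t * ‖c‖ ^ 2)) := by ring
      rw [expand, ← e3, ← e4]
      simp only [sub_self, mul_zero, add_zero]
      linarith [hle]
    rw [← hgw] at h5
    clear_value wt t Q c S g
    have hX : Q - g w - t * Q ≤ 0 := by nlinarith [h5, ht0]
    nlinarith [htQ, hQpos, hX, hlt, ht0, mul_pos ht0 hQpos]
  -- identity: 2 * g w = double sum of w i * w j * ‖p i - p j‖²
  have hcc : ‖c‖ ^ 2 = ∑ i, ∑ j, w i * w j * ⟪p i, p j⟫ := by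
    rw [← real_inner_self_eq_norm_sq, hc_def, sum_inner]
    refine Finset.sum_congr rfl fun i _ => ?_
    rw [real_inner_smul_left, inner_sum, Finset.mul_sum]
    refine Finset.sum_congr rfl fun j _ => ?_
    rw [real_inner_smul_right]; ring
  have hAA : ∀ f : ι → ℝ, (∑ i, ∑ j, w i * w j * f i) = ∑ i, w i * f i := by
    intro f
    calc (∑ i, ∑ j, w i * w j * f i) = ∑ i, (w i * f i) * ∑ j, w j := by
          refine Finset.sum_congr rfl fun i _ => ?_
          rw [Finset.mul_sum]
          exact Finset.sum_congr rfl fun j _ => by ring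
      _ = ∑ i, w i * f i := by rw [hw1]; simp
  have hBB : ∀ f : ι → ℝ, (∑ i, ∑ j, w i * w j * f j) = ∑ j, w j * f j := by
    intro f
    rw [Finset.sum_comm]
    calc (∑ j, ∑ i, w i * w j * f j) = ∑ j, (w j * f j) * ∑ i, w i := by
          refine Finset.sum_congr rfl fun j _ => ?_
          rw [Finset.mul_sum]
          exact Finset.sum_congr rfl fun i _ => by ring
      _ = ∑ j, w j * f j := by rw [hw1]; simp
  have hiden : 2 * g w = ∑ i, ∑ j, w i * w j * ‖p i - p j‖ ^ 2 := by
    have h1 : (∑ i, ∑ j, w i * w j * ‖p i - p j‖ ^ 2)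
        = ∑ i, ((∑ j, w i * w j * ‖p i‖ ^ 2) + (∑ j, w i * w j * ‖p j‖ ^ 2)
            - 2 * ∑ j, w i * w j * ⟪p i, p j⟫) := by
      refine Finset.sum_congr rfl fun i _ => ?_
      rw [Finset.mul_sum, ← Finset.sum_add_distrib, ← Finset.sum_sub_distrib]
      refine Finset.sum_congr rfl fun j _ => ?_
      rw [norm_sub_sq_real]; ring
    rw [h1, Finset.sum_sub_distrib, Finset.sum_add_distrib, hAA (fun i => ‖p i‖ ^ 2)]
    have h2 : (∑ i, ∑ j, w i * w j * ‖p j‖ ^ 2) = S := hBB (fun j => ‖p j‖ ^ 2)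
    have h3 : (∑ i, 2 * ∑ j, w i * w j * ⟪p i, p j⟫)
        = 2 * ∑ i, ∑ j, w i * w j * ⟪p i, p j⟫ := by rw [Finset.mul_sum]
    rw [h2, h3, ← hcc, hgw, hS_def]
    ring
  -- bound the double sum
  have hption : ∀ i j, w i * w j * ‖p i - p j‖ ^ 2 ≤ (if i = j then 0 else w i * w j * d ^ 2) := by
    intro i j
    by_cases h : i = j
    · simp [h]
    · rw [if_neg h]
      have h1 : ‖p i - p j‖ ≤ d := by rw [← dist_eq_norm]; exact hd i j
      have := mul_le_mul h1 h1 (norm_nonneg _) hd0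
      have hw := mul_nonneg (hw0 i) (hw0 j)
      nlinarith
  have hbd : (∑ i, ∑ j, w i * w j * ‖p i - p j‖ ^ 2) ≤ d ^ 2 * (1 - ∑ i, w i ^ 2) := by
    calc (∑ i, ∑ j, w i * w j * ‖p i - p j‖ ^ 2)
        ≤ ∑ i, ∑ j, (if i = j then 0 else w i * w j * d ^ 2) :=
          Finset.sum_le_sum fun i _ => Finset.sum_le_sum fun j _ => hption i j
      _ = ∑ i, ((∑ j, w i * w j * d ^ 2) - w i * w i * d ^ 2) := by
          refine Finset.sum_congr rfl fun i _ => ?_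
          have hpt : ∀ j : ι, (if i = j then (0:ℝ) else w i * w j * d ^ 2)
              = w i * w j * d ^ 2 - (if i = j then w i * w j * d ^ 2 else 0) := by
            intro j; split <;> ring
          rw [Finset.sum_congr rfl fun j _ => hpt j, Finset.sum_sub_distrib,
            Finset.sum_ite_eq]
          simp
      _ = d ^ 2 * (1 - ∑ i, w i ^ 2) := by
          rw [Finset.sum_sub_distrib]
          have h4 : (∑ i, ∑ j, w i * w j * d ^ 2) = d ^ 2 := by
            rw [hAA (fun _ => d ^ 2), ← Finset.sum_mul, hw1, one_mul]
          have h5 : (∑ i, w i * w i * d ^ 2) = (∑ i, w i ^ 2) * d ^ 2 := by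
            rw [Finset.sum_mul]
            exact Finset.sum_congr rfl fun i _ => by ring
          rw [h4, h5]; ring
  have hCS : (1:ℝ) ≤ (Fintype.card ι : ℝ) * ∑ i, w i ^ 2 := by
    have := sq_sum_le_card_mul_sum_sq (s := (univ : Finset ι)) (f := w)
    rw [hw1] at this
    simpa using this
  have hsq0 : (0:ℝ) ≤ ∑ i, w i ^ 2 := Finset.sum_nonneg fun i _ => sq_nonneg _
  have hm : (Fintype.card ι : ℝ) ≤ (n : ℝ) + 1 := by exact_mod_cast hcard
  have h6 : (1:ℝ) ≤ ((n:ℝ) + 1) * ∑ i, w i ^ 2 :=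
    hCS.trans (mul_le_mul_of_nonneg_right hm hsq0)
  have hn1 : (0:ℝ) < (n:ℝ) + 1 := by positivity
  have hgle : g w ≤ (n:ℝ) / (2 * ((n:ℝ) + 1)) * d ^ 2 := by
    rw [div_mul_eq_mul_div, le_div_iff₀ (by positivity)]
    have hb2 : 2 * g w ≤ d ^ 2 * (1 - ∑ i, w i ^ 2) := hiden ▸ hbd
    nlinarith [mul_le_mul_of_nonneg_left hb2 hn1.le,
      mul_le_mul_of_nonneg_right h6 (sq_nonneg d)]
  refine ⟨c, fun i => ?_⟩
  have h1 : ‖p i - c‖ ^ 2 ≤ (n:ℝ) / (2 * ((n:ℝ) + 1)) * d ^ 2 := (key i).trans hgle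
  have h2 := Real.sqrt_le_sqrt h1
  rw [Real.sqrt_sq (norm_nonneg _)] at h2
  rw [dist_eq_norm]
  refine h2.trans (le_of_eq ?_)
  rw [Real.sqrt_mul (by positivity), Real.sqrt_sq hd0]

theorem jung_inequality (n : ℕ) (hn : 1 ≤ n)
    (K : Set (EuclideanSpace ℝ (Fin n)))
    (hne : K.Nonempty) (hcp : IsCompact K) (hcv : Convex ℝ K) :
    circumradius K ≤ Real.sqrt ((n : ℝ) / (2 * ((n : ℝ) + 1))) * sDiam K := by
  classical
  set d : ℝ := sDiam K with hd_def
  have hd0 : 0 ≤ d := Metric.diam_nonneg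
  set r : ℝ := Real.sqrt ((n : ℝ) / (2 * ((n : ℝ) + 1))) * d with hr_def
  have hr0 : 0 ≤ r := mul_nonneg (Real.sqrt_nonneg _) hd0
  have hne' : Nonempty K := hne.to_subtype
  have hfr : Module.finrank ℝ (EuclideanSpace ℝ (Fin n)) = n := finrank_euclideanSpace_fin
  have hInter : (⋂ x : K, closedBall (x : EuclideanSpace ℝ (Fin n)) r).Nonempty := by
    apply Convex.helly_theorem_compact' (𝕜 := ℝ)
    · intro x; exact convex_closedBall _ _
    · intro x; exact isCompact_closedBall _ _
    · intro I hI
      rcases I.eq_empty_or_nonempty with rfl | hIne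
      · simp
      · have hIne' : Nonempty {x // x ∈ I} := hIne.to_subtype
        have hcard : Fintype.card {x // x ∈ I} ≤ n + 1 := by
          rw [Fintype.card_coe]
          rw [hfr] at hI
          exact hI
        obtain ⟨c, hc⟩ := jung_fin n hcard (fun i : {x // x ∈ I} => ((i : K) : EuclideanSpace ℝ (Fin n)))
          (d := d) (fun i j => Metric.dist_le_diam_of_mem hcp.isBounded (i : K).2 (j : K).2)
        refine ⟨c, ?_⟩
        rw [Set.mem_iInter₂]
        intro x hx
        rw [Metric.mem_closedBall, dist_comm]
        exact hc ⟨x, hx⟩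
  obtain ⟨c, hc⟩ := hInter
  have hsub : K ⊆ Metric.closedBall c r := by
    intro x hx
    have := Set.mem_iInter.1 hc ⟨x, hx⟩
    rw [Metric.mem_closedBall] at this ⊢
    rwa [dist_comm]
  exact csInf_le ⟨0, fun ρ hρ => hρ.1⟩ ⟨hr0, c, hsub⟩
end

section
/- The 3-dimensional Blaschke–Santaló diagram is star-shaped with respect to the point (1,1,1): for every convex body K in Euclidean n-space ℝⁿ with D(K) > 0 and every λ ∈ [0,1], there exists a convex body K' ⊆ ℝⁿ with D(K') > 0 such that r(K')/R(K') = λ·r(K)/R(K) + (1−λ), w(K')/(2·R(K')) = λ·w(K)/(2·R(K)) + (1−λ), and D(K')/(2·R(K')) = λ·D(K)/(2·R(K)) + (1−λ). -/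
open Metric Set
open scoped RealInnerProductSpace

variable {n : ℕ}

local notation "E" => EuclideanSpace ℝ (Fin n)

lemma bs_exists_unit (hn : 0 < n) : ∃ u : E, ‖u‖ = 1 :=
  ⟨EuclideanSpace.single (⟨0, hn⟩ : Fin n) (1 : ℝ), by
    rw [EuclideanSpace.norm_single]; simp⟩

lemma bs_mem_cth {K : Set E} (hcp : IsCompact K) {ε : ℝ} (hε : 0 ≤ ε) {z : E} :
    z ∈ cthickening ε K ↔ ∃ q ∈ K, dist z q ≤ ε := by
  rw [hcp.cthickening_eq_biUnion_closedBall hε]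
  simp [mem_closedBall]

lemma bs_add_mem_cth {K : Set E} (hcp : IsCompact K) {ε : ℝ} (hε : 0 ≤ ε) {x v : E}
    (hx : x ∈ K) (hv : ‖v‖ ≤ ε) : x + v ∈ cthickening ε K :=
  (bs_mem_cth hcp hε).2 ⟨x, hx, by simpa [dist_eq_norm] using hv⟩

lemma bs_exists_dist_eq_diam {K : Set E} (hcp : IsCompact K) (hne : K.Nonempty) :
    ∃ x ∈ K, ∃ y ∈ K, dist x y = Metric.diam K := by
  have h : ∃ p ∈ K ×ˢ K, IsMaxOn
      (fun p : EuclideanSpace ℝ (Fin n) × EuclideanSpace ℝ (Fin n) => dist p.1 p.2)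
      (K ×ˢ K) p :=
    (hcp.prod hcp).exists_isMaxOn (hne.prod hne) continuous_dist.continuousOn
  obtain ⟨p, hp, hmax⟩ := h
  refine ⟨p.1, hp.1, p.2, hp.2, le_antisymm (dist_le_diam_of_mem hcp.isBounded hp.1 hp.2) ?_⟩
  apply Metric.diam_le_of_forall_dist_le dist_nonneg
  intro x hx y hy
  have := hmax (Set.mk_mem_prod hx hy)
  exact this

lemma bs_diam_cth {K : Set E} (hcp : IsCompact K) (hne : K.Nonempty) {ε : ℝ} (hε : 0 ≤ ε)
    (hn : 0 < n) :
    sDiam (cthickening ε K) = sDiam K + 2 * ε := by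
  refine le_antisymm (by simpa [sDiam, two_mul, mul_comm] using Metric.diam_cthickening_le K hε) ?_
  obtain ⟨x, hx, y, hy, hxy⟩ := bs_exists_dist_eq_diam hcp hne
  obtain ⟨u₀, hu₀⟩ := bs_exists_unit hn
  set D := Metric.diam K with hD
  have hD0 : 0 ≤ D := Metric.diam_nonneg
  obtain ⟨u, hu, huxy⟩ : ∃ u : E, ‖u‖ = 1 ∧ y - x = D • u := by
    rcases eq_or_ne x y with h | h
    · refine ⟨u₀, hu₀, ?_⟩
      have : D = 0 := by rw [← hxy, h, dist_self]
      simp [h, this]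
    · have hd : dist x y ≠ 0 := fun h0 => h (dist_eq_zero.1 h0)
      refine ⟨(dist x y)⁻¹ • (y - x), ?_, ?_⟩
      · rw [norm_smul, norm_inv, Real.norm_eq_abs, abs_of_nonneg dist_nonneg,
          dist_eq_norm' x y]
        rw [← dist_eq_norm' x y]
        field_simp
      · rw [smul_smul, ← hxy]
        rw [mul_inv_cancel₀ hd, one_smul]
  have hp : x + (-ε) • u ∈ cthickening ε K := bs_add_mem_cth hcp hε hx (by
    rw [norm_smul, hu]; simp [abs_of_nonneg hε])
  have hq : y + ε • u ∈ cthickening ε K := bs_add_mem_cth hcp hε hy (by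
    rw [norm_smul, hu]; simp [abs_of_nonneg hε])
  have hdist : dist (x + (-ε) • u) (y + ε • u) = D + 2 * ε := by
    rw [dist_eq_norm']
    have : y + ε • u - (x + (-ε) • u) = (D + 2 * ε) • u := by
      rw [add_smul]; rw [show y + ε • u - (x + (-ε) • u) = (y - x) + (ε • u - (-ε) • u) by abel,
        huxy]
      congr 1
      rw [neg_smul, sub_neg_eq_add, two_mul, add_smul]
    rw [this, norm_smul, hu, mul_one, Real.norm_eq_abs, abs_of_nonneg (by linarith)]
  calc D + 2 * ε = dist (x + (-ε) • u) (y + ε • u) := hdist.symm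
    _ ≤ sDiam (cthickening ε K) :=
      dist_le_diam_of_mem (hcp.cthickening).isBounded hp hq

lemma bs_circ_nonempty {K : Set E} (hcp : IsCompact K) :
    {ρ : ℝ | 0 ≤ ρ ∧ ∃ c, K ⊆ Metric.closedBall c ρ}.Nonempty := by
  obtain ⟨r, hr⟩ := hcp.isBounded.subset_closedBall 0
  exact ⟨max r 0, le_max_right _ _,
    ⟨0, hr.trans (closedBall_subset_closedBall (le_max_left _ _))⟩⟩

lemma bs_circ_bddBelow {K : Set E} :
    BddBelow {ρ : ℝ | 0 ≤ ρ ∧ ∃ c, K ⊆ Metric.closedBall c ρ} :=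
  ⟨0, fun _ h => h.1⟩

lemma bs_diam_le_circ {K : Set E} {ρ : ℝ} {c : E} (h0 : 0 ≤ ρ)
    (h : K ⊆ Metric.closedBall c ρ) : sDiam K ≤ 2 * ρ := by
  apply Metric.diam_le_of_forall_dist_le (by linarith)
  intro x hx y hy
  calc dist x y ≤ dist x c + dist c y := dist_triangle x c y
    _ ≤ ρ + ρ := add_le_add (h hx) (by rw [dist_comm]; exact h hy)
    _ = 2 * ρ := by ring

lemma bs_circ_pos {K : Set E} (hcp : IsCompact K) (hD : 0 < sDiam K) :
    0 < circumradius K := by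
  have : sDiam K / 2 ≤ circumradius K := by
    apply le_csInf (bs_circ_nonempty hcp)
    rintro ρ ⟨h0, c, hsub⟩
    linarith [bs_diam_le_circ h0 hsub]
  linarith

lemma bs_circ_cth {K : Set E} (hcp : IsCompact K) (hne : K.Nonempty) {ε : ℝ} (hε : 0 ≤ ε)
    (hn : 0 < n) :
    circumradius (cthickening ε K) = circumradius K + ε := by
  obtain ⟨u₀, hu₀⟩ := bs_exists_unit hn
  have hcp' : IsCompact (cthickening ε K) := hcp.cthickening
  apply le_antisymm
  · have h1 : ∀ ρ ∈ {ρ : ℝ | 0 ≤ ρ ∧ ∃ c, K ⊆ Metric.closedBall c ρ},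
        circumradius (cthickening ε K) ≤ ρ + ε := by
      rintro ρ ⟨h0, c, hsub⟩
      apply csInf_le bs_circ_bddBelow
      refine ⟨by linarith, c, fun z hz => ?_⟩
      obtain ⟨q, hq, hdq⟩ := (bs_mem_cth hcp hε).1 hz
      rw [mem_closedBall]
      calc dist z c ≤ dist z q + dist q c := dist_triangle z q c
        _ ≤ ε + ρ := add_le_add hdq (hsub hq)
        _ = ρ + ε := by ring
    have h2 : circumradius K ≥ circumradius (cthickening ε K) - ε := by
      apply le_csInf (bs_circ_nonempty hcp)
      intro ρ hρ
      linarith [h1 ρ hρ]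
    linarith
  · apply le_csInf (bs_circ_nonempty hcp')
    rintro ρ ⟨h0, c, hsub⟩
    obtain ⟨x, hx⟩ := hne
    have hρε : ε ≤ ρ := by
      have h1 : x + ε • u₀ ∈ Metric.closedBall c ρ :=
        hsub (bs_add_mem_cth hcp hε hx (by rw [norm_smul, hu₀]; simp [abs_of_nonneg hε]))
      have h2 : x + (-ε) • u₀ ∈ Metric.closedBall c ρ :=
        hsub (bs_add_mem_cth hcp hε hx (by rw [norm_smul, hu₀]; simp [abs_of_nonneg hε]))
      have h3 : dist (x + ε • u₀) (x + (-ε) • u₀) = 2 * ε := by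
        rw [dist_eq_norm]
        have : x + ε • u₀ - (x + (-ε) • u₀) = (2 * ε) • u₀ := by
          rw [two_mul, add_smul, neg_smul]; abel
        rw [this, norm_smul, hu₀, mul_one, Real.norm_eq_abs, abs_of_nonneg (by linarith)]
      have := dist_triangle (x + ε • u₀) c (x + (-ε) • u₀)
      rw [h3] at this
      rw [mem_closedBall] at h1 h2
      rw [dist_comm] at h2
      linarith
    have hsubK : K ⊆ Metric.closedBall c (ρ - ε) := by
      intro y hy
      rcases eq_or_ne y c with rfl | hyc
      · simpa [mem_closedBall] using by linarith
      · have hd : (0:ℝ) < ‖y - c‖ := by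
          rw [norm_pos_iff, sub_ne_zero]; exact hyc
        set u := ‖y - c‖⁻¹ • (y - c) with hu_def
        have hu : ‖u‖ = 1 := by
          rw [hu_def, norm_smul, norm_inv, Real.norm_eq_abs, abs_of_nonneg (norm_nonneg _),
            inv_mul_cancel₀ hd.ne']
        have hmem : y + ε • u ∈ Metric.closedBall c ρ :=
          hsub (bs_add_mem_cth hcp hε hy (by rw [norm_smul, hu]; simp [abs_of_nonneg hε]))
        rw [mem_closedBall, dist_eq_norm] at hmem
        have heq : y + ε • u - c = (1 + ε * ‖y - c‖⁻¹) • (y - c) := by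
          rw [hu_def, smul_smul, add_smul, one_smul]; abel
        rw [heq, norm_smul, Real.norm_eq_abs,
          abs_of_nonneg (by positivity)] at hmem
        rw [mem_closedBall, dist_eq_norm]
        have : (1 + ε * ‖y - c‖⁻¹) * ‖y - c‖ = ‖y - c‖ + ε := by
          field_simp
        linarith [this ▸ hmem]
    have : circumradius K ≤ ρ - ε :=
      csInf_le bs_circ_bddBelow ⟨by linarith, c, hsubK⟩
    linarith

lemma bs_inr_nonempty {K : Set E} (hne : K.Nonempty) :
    {ρ : ℝ | 0 ≤ ρ ∧ ∃ c, Metric.closedBall c ρ ⊆ K}.Nonempty := by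
  obtain ⟨c, hc⟩ := hne
  exact ⟨0, le_refl _, c, by rw [closedBall_zero]; exact singleton_subset_iff.2 hc⟩

lemma bs_inr_bddAbove {K : Set E} (hcp : IsCompact K) (hn : 0 < n) :
    BddAbove {ρ : ℝ | 0 ≤ ρ ∧ ∃ c, Metric.closedBall c ρ ⊆ K} := by
  obtain ⟨u₀, hu₀⟩ := bs_exists_unit hn
  refine ⟨Metric.diam K, ?_⟩
  rintro ρ ⟨h0, c, hsub⟩
  have h1 : c ∈ K := hsub (mem_closedBall_self h0)
  have h2 : c + ρ • u₀ ∈ K := hsub (by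
    rw [mem_closedBall, dist_eq_norm, add_sub_cancel_left, norm_smul, hu₀, mul_one,
      Real.norm_eq_abs, abs_of_nonneg h0])
  have h3 : dist (c + ρ • u₀) c = ρ := by
    rw [dist_eq_norm, add_sub_cancel_left, norm_smul, hu₀, mul_one, Real.norm_eq_abs,
      abs_of_nonneg h0]
  calc ρ = dist (c + ρ • u₀) c := h3.symm
    _ ≤ Metric.diam K := dist_le_diam_of_mem hcp.isBounded h2 h1

lemma bs_inr_nonneg {K : Set E} (hcp : IsCompact K) (hne : K.Nonempty) (hn : 0 < n) :
    0 ≤ inradius K := by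
  obtain ⟨c, hc⟩ := hne
  exact le_csSup (bs_inr_bddAbove hcp hn)
    ⟨le_refl _, c, by rw [closedBall_zero]; exact singleton_subset_iff.2 hc⟩

lemma bs_inr_cth {K : Set E} (hcp : IsCompact K) (hne : K.Nonempty) (hcv : Convex ℝ K)
    {ε : ℝ} (hε : 0 ≤ ε) (hn : 0 < n) :
    inradius (cthickening ε K) = inradius K + ε := by
  have hcp' : IsCompact (cthickening ε K) := hcp.cthickening
  have hne' : (cthickening ε K).Nonempty := hne.mono (self_subset_cthickening K)
  apply le_antisymm
  · apply csSup_le (bs_inr_nonempty hne')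
    rintro ρ ⟨h0, c, hsub⟩
    by_cases hρε : ρ ≤ ε
    · linarith [bs_inr_nonneg hcp hne hn]
    push_neg at hρε
    have hsubK : Metric.closedBall c (ρ - ε) ⊆ K := by
      intro x hx
      by_contra hxK
      obtain ⟨f, t, hfa, hft⟩ := geometric_hahn_banach_closed_point hcv hcp.isClosed hxK
      set v := (InnerProductSpace.toDual ℝ (EuclideanSpace ℝ (Fin n))).symm f with hv_def
      have hv : ∀ y : E, ⟪v, y⟫ = f y := fun y => InnerProductSpace.toDual_symm_apply
      obtain ⟨a, ha⟩ := hne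
      have hvne : v ≠ 0 := by
        intro h0'
        have h1 : f a < t := hfa a ha
        have h2 : t < f x := hft
        rw [← hv a, h0', inner_zero_left] at h1
        rw [← hv x, h0', inner_zero_left] at h2
        linarith
      have hd : (0:ℝ) < ‖v‖ := norm_pos_iff.2 hvne
      set w : E := ‖v‖⁻¹ • v with hw_def
      have hw : ‖w‖ = 1 := by
        rw [hw_def, norm_smul, norm_inv, Real.norm_eq_abs, abs_of_nonneg (norm_nonneg _),
          inv_mul_cancel₀ hd.ne']
      have hwy : ∀ y : E, ⟪w, y⟫ = ‖v‖⁻¹ * f y := fun y => by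
        rw [hw_def, real_inner_smul_left, hv]
      have hz : c + ρ • w ∈ cthickening ε K := hsub (by
        rw [mem_closedBall, dist_eq_norm, add_sub_cancel_left, norm_smul, hw, mul_one,
          Real.norm_eq_abs, abs_of_nonneg h0])
      obtain ⟨q, hq, hdq⟩ := (bs_mem_cth hcp hε).1 hz
      have e1 : ⟪w, c + ρ • w⟫ = ⟪w, c⟫ + ρ := by
        rw [inner_add_right, real_inner_smul_right, real_inner_self_eq_norm_mul_norm, hw]
        ring
      have e2 : ⟪w, c + ρ • w⟫ - ⟪w, q⟫ ≤ ε := by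
        rw [← inner_sub_right]
        calc ⟪w, c + ρ • w - q⟫ ≤ ‖w‖ * ‖c + ρ • w - q‖ := real_inner_le_norm _ _
          _ ≤ ε := by
            rw [hw, one_mul, ← dist_eq_norm]
            exact hdq
      have e3 : ⟪w, q⟫ < ‖v‖⁻¹ * t := by
        rw [hwy]
        exact (mul_lt_mul_iff_right₀ (inv_pos.2 hd)).2 (hfa q hq)
      have e4 : ‖v‖⁻¹ * t < ⟪w, x⟫ := by
        rw [hwy]
        exact (mul_lt_mul_iff_right₀ (inv_pos.2 hd)).2 hft
      have e5 : ⟪w, x⟫ - ⟪w, c⟫ ≤ ρ - ε := by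
        rw [← inner_sub_right]
        calc ⟪w, x - c⟫ ≤ ‖w‖ * ‖x - c‖ := real_inner_le_norm _ _
          _ ≤ ρ - ε := by
            rw [hw, one_mul, ← dist_eq_norm]
            exact mem_closedBall.1 hx
      linarith
    have : ρ - ε ≤ inradius K := le_csSup (bs_inr_bddAbove hcp hn) ⟨by linarith, c, hsubK⟩
    linarith
  · have h1 : ∀ ρ ∈ {ρ : ℝ | 0 ≤ ρ ∧ ∃ c, Metric.closedBall c ρ ⊆ K},
        ρ + ε ≤ inradius (cthickening ε K) := by
      rintro ρ ⟨h0, c, hsub⟩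
      apply le_csSup (bs_inr_bddAbove hcp' hn)
      refine ⟨by linarith, c, ?_⟩
      intro z hz
      rw [mem_closedBall] at hz
      by_cases hzρ : dist z c ≤ ρ
      · exact self_subset_cthickening K (hsub (mem_closedBall.2 hzρ))
      push_neg at hzρ
      have hd : (0:ℝ) < dist z c := lt_of_le_of_lt h0 hzρ
      have hq : c + (ρ / dist z c) • (z - c) ∈ K := by
        apply hsub
        rw [mem_closedBall, dist_eq_norm, add_sub_cancel_left, norm_smul, Real.norm_eq_abs,
          abs_of_nonneg (by positivity), dist_eq_norm] at *
        rw [div_mul_cancel₀ _ (by rw [← dist_eq_norm]; exact hd.ne')]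
      refine (bs_mem_cth hcp hε).2 ⟨_, hq, ?_⟩
      have heq : z - (c + (ρ / dist z c) • (z - c)) = (1 - ρ / dist z c) • (z - c) := by
        rw [sub_smul, one_smul]; abel
      rw [dist_eq_norm, heq, norm_smul, Real.norm_eq_abs, ← dist_eq_norm,
        abs_of_nonneg (by rw [sub_nonneg]; exact div_le_one_of_le₀ hzρ.le dist_nonneg)]
      have : (1 - ρ / dist z c) * dist z c = dist z c - ρ := by
        field_simp
      rw [this]
      linarith
    have h2 : inradius K ≤ inradius (cthickening ε K) - ε := by
      apply csSup_le (bs_inr_nonempty hne)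
      intro ρ hρ
      linarith [h1 ρ hρ]
    linarith

lemma bs_inner_continuous (u : E) : Continuous fun x : E => (⟪u, x⟫ : ℝ) :=
  continuous_const.inner continuous_id

lemma bs_sSup_inner_cth {K : Set E} (hcp : IsCompact K) (hne : K.Nonempty)
    {ε : ℝ} (hε : 0 ≤ ε) {u : E} (hu : ‖u‖ = 1) :
    sSup ((fun x => (⟪u, x⟫ : ℝ)) '' cthickening ε K)
      = sSup ((fun x => (⟪u, x⟫ : ℝ)) '' K) + ε := by
  have hf := bs_inner_continuous u
  have hcp' : IsCompact (cthickening ε K) := hcp.cthickening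
  have hne' : (cthickening ε K).Nonempty := hne.mono (self_subset_cthickening K)
  apply le_antisymm
  · apply csSup_le (hne'.image _)
    rintro b ⟨z, hz, rfl⟩
    obtain ⟨q, hq, hdq⟩ := (bs_mem_cth hcp hε).1 hz
    have h1 : (⟪u, z⟫ : ℝ) - ⟪u, q⟫ ≤ ε := by
      rw [← inner_sub_right]
      calc (⟪u, z - q⟫ : ℝ) ≤ ‖u‖ * ‖z - q‖ := real_inner_le_norm _ _
        _ ≤ ε := by rw [hu, one_mul, ← dist_eq_norm]; exact hdq
    have h2 : (⟪u, q⟫ : ℝ) ≤ sSup ((fun x => (⟪u, x⟫ : ℝ)) '' K) :=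
      le_csSup ((hcp.image hf).bddAbove) ⟨q, hq, rfl⟩
    linarith
  · obtain ⟨q, hq, hmax⟩ := hcp.exists_isMaxOn hne hf.continuousOn
    have hfq : sSup ((fun x => (⟪u, x⟫ : ℝ)) '' K) = ⟪u, q⟫ := by
      apply le_antisymm
      · apply csSup_le (hne.image _)
        rintro b ⟨x, hx, rfl⟩
        exact hmax hx
      · exact le_csSup ((hcp.image hf).bddAbove) ⟨q, hq, rfl⟩
    have hmem : q + ε • u ∈ cthickening ε K := bs_add_mem_cth hcp hε hq (by
      rw [norm_smul, hu, mul_one, Real.norm_eq_abs, abs_of_nonneg hε])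
    have hval : (⟪u, q + ε • u⟫ : ℝ) = ⟪u, q⟫ + ε := by
      rw [inner_add_right, real_inner_smul_right, real_inner_self_eq_norm_mul_norm, hu]
      ring
    rw [hfq]
    calc (⟪u, q⟫ : ℝ) + ε = ⟪u, q + ε • u⟫ := hval.symm
      _ ≤ sSup ((fun x => (⟪u, x⟫ : ℝ)) '' cthickening ε K) :=
        le_csSup ((hcp'.image hf).bddAbove) ⟨_, hmem, rfl⟩

lemma bs_sInf_inner_cth {K : Set E} (hcp : IsCompact K) (hne : K.Nonempty)
    {ε : ℝ} (hε : 0 ≤ ε) {u : E} (hu : ‖u‖ = 1) :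
    sInf ((fun x => (⟪u, x⟫ : ℝ)) '' cthickening ε K)
      = sInf ((fun x => (⟪u, x⟫ : ℝ)) '' K) - ε := by
  have hf := bs_inner_continuous u
  have hcp' : IsCompact (cthickening ε K) := hcp.cthickening
  have hne' : (cthickening ε K).Nonempty := hne.mono (self_subset_cthickening K)
  apply le_antisymm
  · obtain ⟨q, hq, hmin⟩ := hcp.exists_isMinOn hne hf.continuousOn
    have hfq : sInf ((fun x => (⟪u, x⟫ : ℝ)) '' K) = ⟪u, q⟫ := by
      apply le_antisymm
      · exact csInf_le ((hcp.image hf).bddBelow) ⟨q, hq, rfl⟩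
      · apply le_csInf (hne.image _)
        rintro b ⟨x, hx, rfl⟩
        exact hmin hx
    have hmem : q + (-ε) • u ∈ cthickening ε K := bs_add_mem_cth hcp hε hq (by
      rw [norm_smul, hu, mul_one, Real.norm_eq_abs, abs_neg, abs_of_nonneg hε])
    have hval : (⟪u, q + (-ε) • u⟫ : ℝ) = ⟪u, q⟫ - ε := by
      rw [inner_add_right, real_inner_smul_right, real_inner_self_eq_norm_mul_norm, hu]
      ring
    rw [hfq]
    calc sInf ((fun x => (⟪u, x⟫ : ℝ)) '' cthickening ε K)
        ≤ ⟪u, q + (-ε) • u⟫ := csInf_le ((hcp'.image hf).bddBelow) ⟨_, hmem, rfl⟩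
      _ = ⟪u, q⟫ - ε := hval
  · apply le_csInf (hne'.image _)
    rintro b ⟨z, hz, rfl⟩
    obtain ⟨q, hq, hdq⟩ := (bs_mem_cth hcp hε).1 hz
    have h1 : (⟪u, q⟫ : ℝ) - ⟪u, z⟫ ≤ ε := by
      rw [← inner_sub_right]
      calc (⟪u, q - z⟫ : ℝ) ≤ ‖u‖ * ‖q - z‖ := real_inner_le_norm _ _
        _ ≤ ε := by rw [hu, one_mul, ← dist_eq_norm, dist_comm]; exact hdq
    have h2 : sInf ((fun x => (⟪u, x⟫ : ℝ)) '' K) ≤ ⟪u, q⟫ :=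
      csInf_le ((hcp.image hf).bddBelow) ⟨q, hq, rfl⟩
    linarith

lemma bs_width_set_nonempty {K : Set E} (hn : 0 < n) :
    {b : ℝ | ∃ u : E, ‖u‖ = 1 ∧
      b = sSup ((fun x => (⟪u, x⟫ : ℝ)) '' K) - sInf ((fun x => (⟪u, x⟫ : ℝ)) '' K)}.Nonempty := by
  obtain ⟨u₀, hu₀⟩ := bs_exists_unit hn
  exact ⟨_, u₀, hu₀, rfl⟩

lemma bs_width_set_bddBelow {K : Set E} (hcp : IsCompact K) (hne : K.Nonempty) :
    BddBelow {b : ℝ | ∃ u : E, ‖u‖ = 1 ∧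
      b = sSup ((fun x => (⟪u, x⟫ : ℝ)) '' K) - sInf ((fun x => (⟪u, x⟫ : ℝ)) '' K)} := by
  refine ⟨0, ?_⟩
  rintro b ⟨u, hu, rfl⟩
  obtain ⟨x, hx⟩ := hne
  have hf := bs_inner_continuous u
  have h1 : sInf ((fun x => (⟪u, x⟫ : ℝ)) '' K) ≤ ⟪u, x⟫ :=
    csInf_le ((hcp.image hf).bddBelow) ⟨x, hx, rfl⟩
  have h2 : (⟪u, x⟫ : ℝ) ≤ sSup ((fun x => (⟪u, x⟫ : ℝ)) '' K) :=
    le_csSup ((hcp.image hf).bddAbove) ⟨x, hx, rfl⟩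
  linarith

lemma bs_sInf_add (s : Set ℝ) (hs : s.Nonempty) (hb : BddBelow s) (c : ℝ) :
    sInf ((fun x => x + c) '' s) = sInf s + c := by
  apply le_antisymm
  · have h1 : ∀ x ∈ s, sInf ((fun x => x + c) '' s) ≤ x + c := by
      intro x hx
      obtain ⟨l, hl⟩ := hb
      exact csInf_le ⟨l + c, by rintro b ⟨y, hy, rfl⟩; exact add_le_add_left (hl hy) c⟩
        ⟨x, hx, rfl⟩
    have h2 : sInf ((fun x => x + c) '' s) - c ≤ sInf s := by
      apply le_csInf hs
      intro x hx
      linarith [h1 x hx]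
    linarith
  · apply le_csInf (hs.image _)
    rintro b ⟨x, hx, rfl⟩
    exact add_le_add_left (csInf_le hb hx) c

lemma bs_width_cth {K : Set E} (hcp : IsCompact K) (hne : K.Nonempty)
    {ε : ℝ} (hε : 0 ≤ ε) (hn : 0 < n) :
    width (cthickening ε K) = width K + 2 * ε := by
  have hset : {b : ℝ | ∃ u : E, ‖u‖ = 1 ∧
      b = sSup ((fun x => (⟪u, x⟫ : ℝ)) '' cthickening ε K)
        - sInf ((fun x => (⟪u, x⟫ : ℝ)) '' cthickening ε K)}
      = (fun b => b + 2 * ε) '' {b : ℝ | ∃ u : E, ‖u‖ = 1 ∧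
      b = sSup ((fun x => (⟪u, x⟫ : ℝ)) '' K) - sInf ((fun x => (⟪u, x⟫ : ℝ)) '' K)} := by
    ext b
    constructor
    · rintro ⟨u, hu, rfl⟩
      refine ⟨sSup ((fun x => (⟪u, x⟫ : ℝ)) '' K) - sInf ((fun x => (⟪u, x⟫ : ℝ)) '' K),
        ⟨u, hu, rfl⟩, ?_⟩
      rw [bs_sSup_inner_cth hcp hne hε hu, bs_sInf_inner_cth hcp hne hε hu]
      ring
    · rintro ⟨b, ⟨u, hu, rfl⟩, rfl⟩
      refine ⟨u, hu, ?_⟩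
      rw [bs_sSup_inner_cth hcp hne hε hu, bs_sInf_inner_cth hcp hne hε hu]
      ring
  rw [width, width, hset, bs_sInf_add _ (bs_width_set_nonempty hn)
    (bs_width_set_bddBelow hcp hne)]

lemma bs_circ_singleton (c : E) : circumradius ({c} : Set E) = 0 := by
  have hmem : (0:ℝ) ∈ {ρ : ℝ | 0 ≤ ρ ∧ ∃ c', ({c} : Set E) ⊆ Metric.closedBall c' ρ} :=
    ⟨le_refl _, c, by rw [closedBall_zero]⟩
  exact le_antisymm (csInf_le bs_circ_bddBelow hmem)
    (le_csInf ⟨0, hmem⟩ fun ρ hρ => hρ.1)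

lemma bs_inr_singleton (c : E) (hn : 0 < n) : inradius ({c} : Set E) = 0 := by
  obtain ⟨u₀, hu₀⟩ := bs_exists_unit hn
  have hmem : (0:ℝ) ∈ {ρ : ℝ | 0 ≤ ρ ∧ ∃ c', Metric.closedBall c' ρ ⊆ ({c} : Set E)} :=
    ⟨le_refl _, c, by rw [closedBall_zero]⟩
  have hub : ∀ ρ ∈ {ρ : ℝ | 0 ≤ ρ ∧ ∃ c', Metric.closedBall c' ρ ⊆ ({c} : Set E)},
      ρ ≤ 0 := by
    rintro ρ ⟨h0, c', hsub⟩
    have h1 : c' ∈ ({c} : Set E) := hsub (mem_closedBall_self h0)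
    have h2 : c' + ρ • u₀ ∈ ({c} : Set E) := hsub (by
      rw [mem_closedBall, dist_eq_norm, add_sub_cancel_left, norm_smul, hu₀, mul_one,
        Real.norm_eq_abs, abs_of_nonneg h0])
    rw [mem_singleton_iff] at h1 h2
    have : ρ • u₀ = 0 := by
      have := h2.trans h1.symm
      rwa [add_eq_left] at this
    rcases smul_eq_zero.1 this with h | h
    · exact h.le
    · exfalso; rw [h, norm_zero] at hu₀; linarith
  exact le_antisymm (csSup_le ⟨0, hmem⟩ hub) (le_csSup ⟨0, hub⟩ hmem)

lemma bs_width_singleton (c : E) (hn : 0 < n) : width ({c} : Set E) = 0 := by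
  have hset : {b : ℝ | ∃ u : E, ‖u‖ = 1 ∧
      b = sSup ((fun x => (⟪u, x⟫ : ℝ)) '' ({c} : Set E))
        - sInf ((fun x => (⟪u, x⟫ : ℝ)) '' ({c} : Set E))} = {0} := by
    apply Subset.antisymm
    · rintro b ⟨u, hu, rfl⟩
      simp [image_singleton]
    · rintro b hb
      rw [mem_singleton_iff] at hb
      obtain ⟨u₀, hu₀⟩ := bs_exists_unit hn
      exact ⟨u₀, hu₀, by simp [image_singleton, hb]⟩
  rw [width, hset, csInf_singleton]

theorem diagram_starshaped (n : ℕ) (K : Set (EuclideanSpace ℝ (Fin n)))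
    (hne : K.Nonempty) (hcp : IsCompact K) (hcv : Convex ℝ K)
    (hD : 0 < sDiam K) (lam : ℝ) (hlam : lam ∈ Set.Icc (0 : ℝ) 1) :
    ∃ K' : Set (EuclideanSpace ℝ (Fin n)),
      K'.Nonempty ∧ IsCompact K' ∧ Convex ℝ K' ∧ 0 < sDiam K' ∧
      inradius K' / circumradius K' =
        lam * (inradius K / circumradius K) + (1 - lam) ∧
      width K' / (2 * circumradius K') =
        lam * (width K / (2 * circumradius K)) + (1 - lam) ∧
      sDiam K' / (2 * circumradius K') =
        lam * (sDiam K / (2 * circumradius K)) + (1 - lam) := by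
  have hn : 0 < n := by
    by_contra h
    push_neg at h
    have hn0 : n = 0 := Nat.le_zero.1 h
    subst hn0
    haveI : Subsingleton (EuclideanSpace ℝ (Fin 0)) :=
      ⟨fun a b => by ext i; exact Fin.elim0 i⟩
    have : sDiam K = 0 := Metric.diam_subsingleton (Set.subsingleton_of_subsingleton)
    linarith
  rcases eq_or_lt_of_le hlam.1 with h0 | h0
  · -- lam = 0
    subst h0
    have hd0 : (0:ℝ) ≤ 1 := zero_le_one
    have hsne : ({(0 : EuclideanSpace ℝ (Fin n))} : Set _).Nonempty := singleton_nonempty _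
    have hscp : IsCompact ({(0 : EuclideanSpace ℝ (Fin n))} : Set _) := isCompact_singleton
    have hscv : Convex ℝ ({(0 : EuclideanSpace ℝ (Fin n))} : Set _) := convex_singleton _
    refine ⟨cthickening 1 {0}, hsne.mono (self_subset_cthickening _),
      hscp.cthickening, hscv.cthickening 1, ?_, ?_, ?_, ?_⟩
    · rw [bs_diam_cth hscp hsne hd0 hn]
      have : sDiam ({(0 : EuclideanSpace ℝ (Fin n))} : Set _) = 0 := Metric.diam_singleton
      rw [this]; norm_num
    · rw [bs_inr_cth hscp hsne hscv hd0 hn, bs_circ_cth hscp hsne hd0 hn,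
        bs_inr_singleton _ hn, bs_circ_singleton]
      norm_num
    · rw [bs_width_cth hscp hsne hd0 hn, bs_circ_cth hscp hsne hd0 hn,
        bs_width_singleton _ hn, bs_circ_singleton]
      norm_num
    · rw [bs_diam_cth hscp hsne hd0 hn, bs_circ_cth hscp hsne hd0 hn,
        bs_circ_singleton]
      have : sDiam ({(0 : EuclideanSpace ℝ (Fin n))} : Set _) = 0 := Metric.diam_singleton
      rw [this]; norm_num
  rcases eq_or_lt_of_le hlam.2 with h1 | h1
  · -- lam = 1
    subst h1
    exact ⟨K, hne, hcp, hcv, hD, by ring, by ring, by ring⟩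
  · -- 0 < lam < 1
    have hR : 0 < circumradius K := bs_circ_pos hcp hD
    set R := circumradius K with hR_def
    set ε := R * (1 - lam) / lam with hε_def
    have hε : 0 ≤ ε := by
      apply le_of_lt
      apply div_pos (mul_pos hR (by linarith)) h0
    have hRε : R + ε = R / lam := by
      rw [hε_def]; field_simp; ring
    refine ⟨cthickening ε K, hne.mono (self_subset_cthickening K),
      hcp.cthickening, hcv.cthickening ε, ?_, ?_, ?_, ?_⟩
    · rw [bs_diam_cth hcp hne hε hn]; linarith
    · rw [bs_inr_cth hcp hne hcv hε hn, bs_circ_cth hcp hne hε hn, ← hR_def, hRε, hε_def]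
      field_simp
    · rw [bs_width_cth hcp hne hε hn, bs_circ_cth hcp hne hε hn, ← hR_def, hRε, hε_def]
      field_simp
    · rw [bs_diam_cth hcp hne hε hn, bs_circ_cth hcp hne hε hn, ← hR_def, hRε, hε_def]
      field_simp
end

section
/- Let K ⊆ C be convex bodies in Euclidean n-space ℝⁿ such that C is a completion of K, i.e. D(K) = D(C) = w(C). For λ ∈ [0,1] set K_λ := { λ·x + (1−λ)·y : x ∈ K, y ∈ C } (the Minkowski combination λK + (1−λ)C). Then D(K_λ) = D(K) and w(K_λ) = λ·w(K) + (1−λ)·w(C) for all λ ∈ [0,1]. -/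
open Metric Set
open scoped RealInnerProductSpace Pointwise

private lemma bddAbove_mul_image {a : ℝ} (ha : 0 ≤ a) {A : Set ℝ} (hA : BddAbove A) :
    BddAbove ((fun x => a * x) '' A) := by
  obtain ⟨M, hM⟩ := hA
  exact ⟨a * M, by rintro _ ⟨x, hx, rfl⟩; exact mul_le_mul_of_nonneg_left (hM hx) ha⟩

private lemma bddBelow_mul_image {a : ℝ} (ha : 0 ≤ a) {A : Set ℝ} (hA : BddBelow A) :
    BddBelow ((fun x => a * x) '' A) := by
  obtain ⟨M, hM⟩ := hA
  exact ⟨a * M, by rintro _ ⟨x, hx, rfl⟩; exact mul_le_mul_of_nonneg_left (hM hx) ha⟩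

private lemma sSup_mul_image {a : ℝ} (ha : 0 ≤ a) {A : Set ℝ} (hne : A.Nonempty)
    (hbdd : BddAbove A) : sSup ((fun x => a * x) '' A) = a * sSup A := by
  rcases ha.eq_or_lt with h | h
  · rw [← h]
    simp only [zero_mul]
    rw [Set.Nonempty.image_const hne 0, csSup_singleton]
  · simpa using ((OrderIso.mulLeft₀ a h).map_csSup' hne hbdd).symm

private lemma sInf_mul_image {a : ℝ} (ha : 0 ≤ a) {A : Set ℝ} (hne : A.Nonempty)
    (hbdd : BddBelow A) : sInf ((fun x => a * x) '' A) = a * sInf A := by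
  rcases ha.eq_or_lt with h | h
  · rw [← h]
    simp only [zero_mul]
    rw [Set.Nonempty.image_const hne 0, csInf_singleton]
  · simpa using ((OrderIso.mulLeft₀ a h).map_csInf' hne hbdd).symm

private lemma image2_comb_eq {a b : ℝ} (A B : Set ℝ) :
    Set.image2 (fun x y => a * x + b * y) A B
      = ((fun x => a * x) '' A) + ((fun y => b * y) '' B) := by
  rw [← Set.image2_add, Set.image2_image_left, Set.image2_image_right]

private lemma sSup_comb {a b : ℝ} (ha : 0 ≤ a) (hb : 0 ≤ b) {A B : Set ℝ}
    (hAne : A.Nonempty) (hA : BddAbove A) (hBne : B.Nonempty) (hB : BddAbove B) :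
    sSup (Set.image2 (fun x y => a * x + b * y) A B) = a * sSup A + b * sSup B := by
  rw [image2_comb_eq,
    csSup_add (hAne.image _) (bddAbove_mul_image ha hA) (hBne.image _) (bddAbove_mul_image hb hB),
    sSup_mul_image ha hAne hA, sSup_mul_image hb hBne hB]

private lemma sInf_comb {a b : ℝ} (ha : 0 ≤ a) (hb : 0 ≤ b) {A B : Set ℝ}
    (hAne : A.Nonempty) (hA : BddBelow A) (hBne : B.Nonempty) (hB : BddBelow B) :
    sInf (Set.image2 (fun x y => a * x + b * y) A B) = a * sInf A + b * sInf B := by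
  rw [image2_comb_eq,
    csInf_add (hAne.image _) (bddBelow_mul_image ha hA) (hBne.image _) (bddBelow_mul_image hb hB),
    sInf_mul_image ha hAne hA, sInf_mul_image hb hBne hB]

theorem completion_combination (n : ℕ) (K C : Set (EuclideanSpace ℝ (Fin n)))
    (hKne : K.Nonempty) (hKcp : IsCompact K) (hKcv : Convex ℝ K)
    (hCne : C.Nonempty) (hCcp : IsCompact C) (hCcv : Convex ℝ C)
    (hKC : K ⊆ C) (hDC : sDiam K = sDiam C) (hwC : sDiam C = width C) :
    ∀ lam ∈ Set.Icc (0 : ℝ) 1,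
      sDiam (Set.image2 (fun x y => lam • x + (1 - lam) • y) K C) = sDiam K ∧
      width (Set.image2 (fun x y => lam • x + (1 - lam) • y) K C) =
        lam * width K + (1 - lam) * width C := by
  intro lam hlam
  obtain ⟨hl0, hl1⟩ := hlam
  have hl1' : (0:ℝ) ≤ 1 - lam := by linarith
  set Kl := Set.image2 (fun x y => lam • x + (1 - lam) • y) K C with hKl
  have hKsub : K ⊆ Kl := by
    intro z hz
    refine ⟨z, hz, z, hKC hz, ?_⟩
    show lam • z + (1 - lam) • z = z
    rw [← add_smul]
    simp
  have hKlC : Kl ⊆ C := by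
    rintro _ ⟨x, hx, y, hy, rfl⟩
    exact hCcv (hKC hx) hy hl0 hl1' (by ring)
  have hdiam : sDiam Kl = sDiam K := by
    unfold sDiam at *
    refine le_antisymm ?_ (Metric.diam_mono hKsub (hCcp.isBounded.subset hKlC))
    calc Metric.diam Kl ≤ Metric.diam C := Metric.diam_mono hKlC hCcp.isBounded
    _ = Metric.diam K := hDC.symm
  refine ⟨hdiam, ?_⟩
  by_cases hn : n = 0
  · subst hn
    have hw : ∀ S : Set (EuclideanSpace ℝ (Fin 0)), width S = 0 := by
      intro S
      unfold width
      convert Real.sInf_empty using 2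
      rw [Set.eq_empty_iff_forall_notMem]
      rintro b ⟨u, hu, -⟩
      have h0 : ‖u‖ = 0 := by rw [EuclideanSpace.norm_eq]; simp
      rw [h0] at hu; norm_num at hu
    rw [hw, hw, hw]; ring
  · -- a unit vector exists
    set u0 : EuclideanSpace ℝ (Fin n) := EuclideanSpace.single (⟨0, Nat.pos_of_ne_zero hn⟩ : Fin n) (1:ℝ) with hu0def
    have hu0 : ‖u0‖ = 1 := by rw [hu0def, EuclideanSpace.norm_single]; norm_num
    have hcont : ∀ u : EuclideanSpace ℝ (Fin n),
        Continuous fun x : EuclideanSpace ℝ (Fin n) => (inner ℝ u x : ℝ) :=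
      fun u => Continuous.inner continuous_const continuous_id
    have hKa : ∀ u, BddAbove ((fun x => (inner ℝ u x : ℝ)) '' K) :=
      fun u => (hKcp.image (hcont u)).bddAbove
    have hKb : ∀ u, BddBelow ((fun x => (inner ℝ u x : ℝ)) '' K) :=
      fun u => (hKcp.image (hcont u)).bddBelow
    have hCa : ∀ u, BddAbove ((fun x => (inner ℝ u x : ℝ)) '' C) :=
      fun u => (hCcp.image (hcont u)).bddAbove
    have hCb : ∀ u, BddBelow ((fun x => (inner ℝ u x : ℝ)) '' C) :=
      fun u => (hCcp.image (hcont u)).bddBelow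
    have hKne' : ∀ u : EuclideanSpace ℝ (Fin n), ((fun x => (inner ℝ u x : ℝ)) '' K).Nonempty :=
      fun u => hKne.image _
    have hCne' : ∀ u : EuclideanSpace ℝ (Fin n), ((fun x => (inner ℝ u x : ℝ)) '' C).Nonempty :=
      fun u => hCne.image _
    -- the image of Kl under inner with u
    have hKey : ∀ u : EuclideanSpace ℝ (Fin n),
        (fun x => (inner ℝ u x : ℝ)) '' Kl
          = Set.image2 (fun p q => lam * p + (1 - lam) * q)
              ((fun x => (inner ℝ u x : ℝ)) '' K) ((fun x => (inner ℝ u x : ℝ)) '' C) := by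
      intro u
      rw [hKl, Set.image_image2, Set.image2_image_left, Set.image2_image_right]
      apply Set.image2_congr
      intro x _ y _
      simp only [inner_add_right, real_inner_smul_right]
    -- C has constant width
    have hbC : ∀ u : EuclideanSpace ℝ (Fin n), ‖u‖ = 1 →
        sSup ((fun x => (inner ℝ u x : ℝ)) '' C) - sInf ((fun x => (inner ℝ u x : ℝ)) '' C)
          = sDiam C := by
      intro u hu
      refine le_antisymm ?_ ?_
      · rw [sub_le_iff_le_add]
        refine csSup_le (hCne' u) ?_
        rintro _ ⟨x, hx, rfl⟩
        rw [← sub_le_iff_le_add']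
        refine le_csInf (hCne' u) ?_
        rintro _ ⟨y, hy, rfl⟩
        have h1 : (inner ℝ u x : ℝ) - inner ℝ u y = inner ℝ u (x - y) := by
          rw [inner_sub_right]
        have h2 : (inner ℝ u (x - y) : ℝ) ≤ ‖x - y‖ := by
          calc (inner ℝ u (x - y) : ℝ) ≤ ‖u‖ * ‖x - y‖ := real_inner_le_norm u (x - y)
          _ = ‖x - y‖ := by rw [hu, one_mul]
        have h3 : ‖x - y‖ ≤ Metric.diam C := by
          rw [← dist_eq_norm]
          exact Metric.dist_le_diam_of_mem hCcp.isBounded hx hy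
        unfold sDiam
        linarith
      · have hmem : sSup ((fun x => (inner ℝ u x : ℝ)) '' C) - sInf ((fun x => (inner ℝ u x : ℝ)) '' C)
            ∈ {b : ℝ | ∃ u : EuclideanSpace ℝ (Fin n), ‖u‖ = 1 ∧
              b = sSup ((fun x => (inner ℝ u x : ℝ)) '' C) - sInf ((fun x => (inner ℝ u x : ℝ)) '' C)} :=
          ⟨u, hu, rfl⟩
        have hbdd : BddBelow {b : ℝ | ∃ u : EuclideanSpace ℝ (Fin n), ‖u‖ = 1 ∧
            b = sSup ((fun x => (inner ℝ u x : ℝ)) '' C) - sInf ((fun x => (inner ℝ u x : ℝ)) '' C)} := by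
          refine ⟨0, ?_⟩
          rintro _ ⟨v, hv, rfl⟩
          rw [sub_nonneg]
          exact csInf_le_csSup (hCne' v) (hCb v) (hCa v)
        calc sDiam C = width C := hwC
        _ ≤ _ := csInf_le hbdd hmem
    -- width set of K is nonempty and bounded below
    have hWKne : {b : ℝ | ∃ u : EuclideanSpace ℝ (Fin n), ‖u‖ = 1 ∧
        b = sSup ((fun x => (inner ℝ u x : ℝ)) '' K) - sInf ((fun x => (inner ℝ u x : ℝ)) '' K)}.Nonempty :=
      ⟨_, u0, hu0, rfl⟩
    have hWKbdd : BddBelow {b : ℝ | ∃ u : EuclideanSpace ℝ (Fin n), ‖u‖ = 1 ∧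
        b = sSup ((fun x => (inner ℝ u x : ℝ)) '' K) - sInf ((fun x => (inner ℝ u x : ℝ)) '' K)} := by
      refine ⟨0, ?_⟩
      rintro _ ⟨v, hv, rfl⟩
      rw [sub_nonneg]
      exact csInf_le_csSup (hKne' v) (hKb v) (hKa v)
    -- the width set of Kl
    have hset : {b : ℝ | ∃ u : EuclideanSpace ℝ (Fin n), ‖u‖ = 1 ∧
          b = sSup ((fun x => (inner ℝ u x : ℝ)) '' Kl) - sInf ((fun x => (inner ℝ u x : ℝ)) '' Kl)}
        = (fun t => lam * t + (1 - lam) * sDiam C) ''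
          {b : ℝ | ∃ u : EuclideanSpace ℝ (Fin n), ‖u‖ = 1 ∧
            b = sSup ((fun x => (inner ℝ u x : ℝ)) '' K) - sInf ((fun x => (inner ℝ u x : ℝ)) '' K)} := by
      have hval : ∀ u : EuclideanSpace ℝ (Fin n), ‖u‖ = 1 →
          sSup ((fun x => (inner ℝ u x : ℝ)) '' Kl) - sInf ((fun x => (inner ℝ u x : ℝ)) '' Kl)
            = lam * (sSup ((fun x => (inner ℝ u x : ℝ)) '' K)
                - sInf ((fun x => (inner ℝ u x : ℝ)) '' K)) + (1 - lam) * sDiam C := by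
        intro u hu
        rw [hKey u, sSup_comb hl0 hl1' (hKne' u) (hKa u) (hCne' u) (hCa u),
          sInf_comb hl0 hl1' (hKne' u) (hKb u) (hCne' u) (hCb u), ← hbC u hu]
        ring
      ext b
      constructor
      · rintro ⟨u, hu, rfl⟩
        exact ⟨_, ⟨u, hu, rfl⟩, (hval u hu).symm⟩
      · rintro ⟨_, ⟨u, hu, rfl⟩, rfl⟩
        exact ⟨u, hu, (hval u hu).symm⟩
    unfold width
    rw [hset]
    have himg : (fun t => lam * t + (1 - lam) * sDiam C) ''
          {b : ℝ | ∃ u : EuclideanSpace ℝ (Fin n), ‖u‖ = 1 ∧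
            b = sSup ((fun x => (inner ℝ u x : ℝ)) '' K) - sInf ((fun x => (inner ℝ u x : ℝ)) '' K)}
        = Set.image2 (fun x y => lam * x + (1 - lam) * y)
          {b : ℝ | ∃ u : EuclideanSpace ℝ (Fin n), ‖u‖ = 1 ∧
            b = sSup ((fun x => (inner ℝ u x : ℝ)) '' K) - sInf ((fun x => (inner ℝ u x : ℝ)) '' K)}
          {sDiam C} := by
      rw [Set.image2_singleton_right]
    rw [himg, sInf_comb hl0 hl1' hWKne hWKbdd (Set.singleton_nonempty _) bddBelow_singleton,
      csInf_singleton, hwC]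
    rfl
end

section
/- Let K ⊆ C be convex bodies in Euclidean n-space ℝⁿ such that C is a Scott-completion of K, i.e. D(K) = D(C) = w(C) and R(K) = R(C), and assume moreover that w(K) = r(K) + R(K). For λ ∈ [0,1] set K_λ := { λ·x + (1−λ)·y : x ∈ K, y ∈ C }. Then for all λ ∈ [0,1]: r(K_λ) = λ·r(K) + (1−λ)·r(C), R(K_λ) = R(K), D(K_λ) = D(K), w(K_λ) = λ·w(K) + (1−λ)·w(C), and in particular w(K_λ) = r(K_λ) + R(K_λ). -/
open Metric Set
open scoped RealInnerProductSpace

namespace ScottAux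
variable {n : ℕ}

noncomputable def hsup (u : EuclideanSpace ℝ (Fin n)) (X : Set (EuclideanSpace ℝ (Fin n))) : ℝ :=
  sSup ((fun x => (inner ℝ u x : ℝ)) '' X)

theorem bddAbove_img (u : EuclideanSpace ℝ (Fin n)) {X : Set (EuclideanSpace ℝ (Fin n))}
    (hX : Bornology.IsBounded X) : BddAbove ((fun x => (inner ℝ u x : ℝ)) '' X) := by
  obtain ⟨M, hM⟩ := hX.exists_norm_le
  refine ⟨‖u‖ * M, ?_⟩
  rintro b ⟨x, hx, rfl⟩
  calc (inner ℝ u x : ℝ) ≤ ‖u‖ * ‖x‖ := real_inner_le_norm u x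
    _ ≤ ‖u‖ * M := by
        have := hM x hx
        nlinarith [norm_nonneg u, norm_nonneg x]

theorem le_hsup {u x : EuclideanSpace ℝ (Fin n)} {X : Set (EuclideanSpace ℝ (Fin n))}
    (hX : Bornology.IsBounded X) (hx : x ∈ X) : (inner ℝ u x : ℝ) ≤ hsup u X :=
  le_csSup (bddAbove_img u hX) ⟨x, hx, rfl⟩

theorem hsup_le {u : EuclideanSpace ℝ (Fin n)} {X : Set (EuclideanSpace ℝ (Fin n))} {B : ℝ}
    (hne : X.Nonempty) (h : ∀ x ∈ X, (inner ℝ u x : ℝ) ≤ B) : hsup u X ≤ B :=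
  csSup_le (hne.image _) (by rintro b ⟨x, hx, rfl⟩; exact h x hx)

theorem hsup_attain {u : EuclideanSpace ℝ (Fin n)} {X : Set (EuclideanSpace ℝ (Fin n))}
    (hX : IsCompact X) (hne : X.Nonempty) : ∃ x ∈ X, hsup u X = (inner ℝ u x : ℝ) := by
  have hcont : Continuous fun x : EuclideanSpace ℝ (Fin n) => (inner ℝ u x : ℝ) :=
    Continuous.inner continuous_const continuous_id
  obtain ⟨x, hx, hmax⟩ := hX.exists_isMaxOn hne hcont.continuousOn
  exact ⟨x, hx, le_antisymm (hsup_le hne fun y hy => hmax hy) (le_hsup hX.isBounded hx)⟩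

theorem hsup_mono {u : EuclideanSpace ℝ (Fin n)} {X Y : Set (EuclideanSpace ℝ (Fin n))}
    (hne : X.Nonempty) (hY : Bornology.IsBounded Y) (hXY : X ⊆ Y) : hsup u X ≤ hsup u Y :=
  hsup_le hne fun x hx => le_hsup hY (hXY hx)

theorem sInf_img {u : EuclideanSpace ℝ (Fin n)} {X : Set (EuclideanSpace ℝ (Fin n))} :
    sInf ((fun x => (inner ℝ u x : ℝ)) '' X) = -hsup (-u) X := by
  rw [Real.sInf_def]
  congr 1
  unfold hsup
  congr 1
  ext b
  simp only [Set.mem_neg, Set.mem_image]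
  constructor
  · rintro ⟨x, hx, hb⟩
    exact ⟨x, hx, by rw [inner_neg_left]; linarith⟩
  · rintro ⟨x, hx, hb⟩
    exact ⟨x, hx, by rw [inner_neg_left] at hb; linarith⟩

theorem hsup_le_ball {u m : EuclideanSpace ℝ (Fin n)} {X : Set (EuclideanSpace ℝ (Fin n))} {R : ℝ}
    (hne : X.Nonempty) (h : X ⊆ closedBall m R) (hu : ‖u‖ = 1) :
    hsup u X ≤ (inner ℝ u m : ℝ) + R := by
  apply hsup_le hne
  intro x hx
  have h1 : (inner ℝ u (x - m) : ℝ) ≤ ‖u‖ * ‖x - m‖ := real_inner_le_norm _ _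
  have h2 : ‖x - m‖ ≤ R := by
    rw [← dist_eq_norm]; exact mem_closedBall.1 (h hx)
  rw [inner_sub_right] at h1
  rw [hu, one_mul] at h1
  linarith

/-- circumradius facts -/
theorem circum_nonneg (X : Set (EuclideanSpace ℝ (Fin n))) : 0 ≤ circumradius X :=
  Real.sInf_nonneg (fun _ hx => hx.1)

theorem circum_le {X : Set (EuclideanSpace ℝ (Fin n))} {c : EuclideanSpace ℝ (Fin n)} {ρ : ℝ}
    (h0 : 0 ≤ ρ) (h : X ⊆ closedBall c ρ) : circumradius X ≤ ρ :=
  csInf_le ⟨0, fun _ hy => hy.1⟩ ⟨h0, c, h⟩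

theorem subset_ball_diam {X : Set (EuclideanSpace ℝ (Fin n))} {x₀ : EuclideanSpace ℝ (Fin n)}
    (hX : Bornology.IsBounded X) (hx₀ : x₀ ∈ X) : X ⊆ closedBall x₀ (Metric.diam X) :=
  fun _ hx => mem_closedBall.2 (Metric.dist_le_diam_of_mem hX hx hx₀)

theorem circum_mono {X Y : Set (EuclideanSpace ℝ (Fin n))} (hXY : X ⊆ Y)
    (hY : Bornology.IsBounded Y) (hYne : Y.Nonempty) : circumradius X ≤ circumradius Y := by
  obtain ⟨y₀, hy₀⟩ := hYne
  apply csInf_le_csInf ⟨0, fun _ hy => hy.1⟩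
  · exact ⟨Metric.diam Y, Metric.diam_nonneg, y₀, subset_ball_diam hY hy₀⟩
  · rintro ρ ⟨h0, c, hc⟩
    exact ⟨h0, c, hXY.trans hc⟩

theorem circum_attain {X : Set (EuclideanSpace ℝ (Fin n))} (hX : IsCompact X)
    (hne : X.Nonempty) : ∃ m, X ⊆ closedBall m (circumradius X) := by
  obtain ⟨x₀, hx₀⟩ := hne
  set R := circumradius X with hR
  set S : Set ℝ := {ρ : ℝ | 0 ≤ ρ ∧ ∃ c, X ⊆ Metric.closedBall c ρ} with hS
  have hSne : S.Nonempty := ⟨Metric.diam X, Metric.diam_nonneg, x₀, subset_ball_diam hX.isBounded hx₀⟩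
  set t : ℕ → Set (EuclideanSpace ℝ (Fin n)) :=
    fun k => ⋂ x ∈ X, closedBall x (R + 1/(k+1)) with ht
  have htne : ∀ k, (t k).Nonempty := by
    intro k
    have hlt : sInf S < R + 1/(k+1) := by
      have : (0:ℝ) < 1/(k+1) := by positivity
      have h2 : R = sInf S := hR
      linarith
    obtain ⟨ρ', ⟨h0, c, hc⟩, hρ'⟩ := exists_lt_of_csInf_lt hSne hlt
    refine ⟨c, ?_⟩
    simp only [ht, Set.mem_iInter]
    intro x hx
    have := hc hx
    rw [mem_closedBall] at this ⊢
    rw [dist_comm]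
    linarith
  have htdec : ∀ k, t (k+1) ⊆ t k := by
    intro k
    simp only [ht]
    refine Set.iInter₂_mono fun x _ => closedBall_subset_closedBall ?_
    have : (1:ℝ)/(k+1+1) ≤ 1/(k+1) := by
      apply one_div_le_one_div_of_le <;> push_cast <;> linarith
    push_cast
    linarith
  have htcl : ∀ k, IsClosed (t k) := fun k => isClosed_biInter fun x _ => isClosed_closedBall
  have ht0 : IsCompact (t 0) := by
    apply (isCompact_closedBall x₀ (R + 1/(0+1))).of_isClosed_subset (htcl 0)
    intro c hc
    simp only [ht, Set.mem_iInter] at hc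
    have := hc x₀ hx₀
    rw [mem_closedBall] at this ⊢
    convert this using 2
    norm_num
  obtain ⟨m, hm⟩ := IsCompact.nonempty_iInter_of_sequence_nonempty_isCompact_isClosed t htdec htne ht0 htcl
  refine ⟨m, fun x hx => ?_⟩
  rw [mem_closedBall]
  refine le_of_forall_pos_le_add fun ε hε => ?_
  obtain ⟨k, hk⟩ := exists_nat_one_div_lt hε
  have hmk : m ∈ t k := by
    have := Set.mem_iInter.1 hm k; exact this
  simp only [ht, Set.mem_iInter] at hmk
  have := hmk x hx
  rw [mem_closedBall, dist_comm] at this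
  have : dist x m ≤ R + 1/(k+1) := this
  linarith [hk, this]

/-- inradius facts -/
theorem dist_smul_unit {c u : EuclideanSpace ℝ (Fin n)} (hu : ‖u‖ = 1) (ρ : ℝ) :
    dist (c + ρ • u) c = |ρ| := by
  rw [dist_eq_norm]
  simp [norm_smul, hu]

theorem mem_ball_smul_unit {c u : EuclideanSpace ℝ (Fin n)} (hu : ‖u‖ = 1) {ρ : ℝ}
    (h0 : 0 ≤ ρ) : c + ρ • u ∈ closedBall c ρ := by
  rw [mem_closedBall, dist_smul_unit hu, abs_of_nonneg h0]

theorem inr_bddAbove {X : Set (EuclideanSpace ℝ (Fin n))}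
    (hu : ∃ u : EuclideanSpace ℝ (Fin n), ‖u‖ = 1) (hX : Bornology.IsBounded X) :
    BddAbove {ρ : ℝ | 0 ≤ ρ ∧ ∃ c, Metric.closedBall c ρ ⊆ X} := by
  obtain ⟨u, hu⟩ := hu
  refine ⟨Metric.diam X, ?_⟩
  rintro ρ ⟨h0, c, hc⟩
  have h1 : c + ρ • u ∈ X := hc (mem_ball_smul_unit hu h0)
  have h2 : c + (-ρ) • u ∈ X := hc (by
    rw [mem_closedBall, dist_smul_unit hu, abs_neg, abs_of_nonneg h0])
  have h3 : dist (c + ρ • u) (c + (-ρ) • u) = 2 * ρ := by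
    rw [dist_eq_norm]
    have he : (c + ρ • u) - (c + (-ρ) • u) = (2*ρ) • u := by module
    rw [he, norm_smul, hu, mul_one, Real.norm_eq_abs,
      abs_of_nonneg (by linarith : (0:ℝ) ≤ 2*ρ)]
  have h4 := Metric.dist_le_diam_of_mem hX h1 h2
  rw [h3] at h4
  linarith

theorem le_inr {X : Set (EuclideanSpace ℝ (Fin n))} {c : EuclideanSpace ℝ (Fin n)} {ρ : ℝ}
    (hu : ∃ u : EuclideanSpace ℝ (Fin n), ‖u‖ = 1) (hX : Bornology.IsBounded X)
    (h0 : 0 ≤ ρ) (h : closedBall c ρ ⊆ X) : ρ ≤ inradius X :=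
  le_csSup (inr_bddAbove hu hX) ⟨h0, c, h⟩

theorem inr_nonneg {X : Set (EuclideanSpace ℝ (Fin n))}
    (hu : ∃ u : EuclideanSpace ℝ (Fin n), ‖u‖ = 1) (hX : Bornology.IsBounded X)
    (hne : X.Nonempty) : 0 ≤ inradius X := by
  obtain ⟨x₀, hx₀⟩ := hne
  exact le_inr hu hX le_rfl
    (by rw [Metric.closedBall_zero]; exact Set.singleton_subset_iff.2 hx₀)

theorem inr_le {X : Set (EuclideanSpace ℝ (Fin n))} {B : ℝ} (h0 : 0 ≤ B)
    (h : ∀ ρ (c : EuclideanSpace ℝ (Fin n)), 0 ≤ ρ → closedBall c ρ ⊆ X → ρ ≤ B) :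
    inradius X ≤ B :=
  Real.sSup_le (by rintro ρ ⟨hρ, c, hc⟩; exact h ρ c hρ hc) h0

theorem inr_attain {X : Set (EuclideanSpace ℝ (Fin n))} (hX : IsCompact X) (hne : X.Nonempty)
    (hu : ∃ u : EuclideanSpace ℝ (Fin n), ‖u‖ = 1) :
    ∃ a, closedBall a (inradius X) ⊆ X := by
  obtain ⟨x₀, hx₀⟩ := hne
  set r := inradius X with hrdef
  have hr0 : 0 ≤ r := inr_nonneg hu hX.isBounded ⟨x₀, hx₀⟩
  rcases eq_or_lt_of_le hr0 with heq | hlt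
  · refine ⟨x₀, ?_⟩
    rw [← heq, Metric.closedBall_zero]
    exact Set.singleton_subset_iff.2 hx₀
  set ρfun : ℕ → ℝ := fun k => r - r/(k+2) with hρfun
  have hρpos : ∀ k, 0 < ρfun k := by
    intro k
    have h1 : r/(k+2) < r := by
      rw [div_lt_iff₀ (by positivity)]
      nlinarith
    simp only [hρfun]
    linarith
  have hρlt : ∀ k, ρfun k < r := by
    intro k
    have : 0 < r/(k+2) := by positivity
    simp only [hρfun]; linarith
  have hρmono : ∀ k, ρfun k ≤ ρfun (k+1) := by
    intro k
    have hk : r/((k:ℝ)+1+2) ≤ r/((k:ℝ)+2) :=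
      div_le_div_of_nonneg_left hr0 (by positivity) (by linarith)
    simp only [hρfun]
    push_cast
    linarith
  set t : ℕ → Set (EuclideanSpace ℝ (Fin n)) := fun k => {c | closedBall c (ρfun k) ⊆ X} with htdef
  have htch : ∀ k (c : EuclideanSpace ℝ (Fin n)), c ∈ t k ↔
      ∀ v : EuclideanSpace ℝ (Fin n), ‖v‖ ≤ ρfun k → c + v ∈ X := by
    intro k c
    constructor
    · intro hc v hv
      exact hc (by simp [mem_closedBall, dist_eq_norm, hv])
    · intro hc z hz
      have hze : z = c + (z - c) := by abel
      rw [hze]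
      refine hc _ ?_
      rw [← dist_eq_norm]
      exact mem_closedBall.1 hz
  have htcl : ∀ k, IsClosed (t k) := by
    intro k
    have he : t k = ⋂ (v : EuclideanSpace ℝ (Fin n)) (_ : ‖v‖ ≤ ρfun k), (fun c => c + v) ⁻¹' X := by
      ext c
      rw [htch]
      simp only [Set.mem_iInter, Set.mem_preimage]
    rw [he]
    exact isClosed_iInter fun v => isClosed_iInter fun _ =>
      hX.isClosed.preimage (continuous_id.add continuous_const)
  have htne : ∀ k, (t k).Nonempty := by
    intro k
    have hSne : ({ρ : ℝ | 0 ≤ ρ ∧ ∃ c : EuclideanSpace ℝ (Fin n),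
        Metric.closedBall c ρ ⊆ X}).Nonempty :=
      ⟨0, le_rfl, x₀, by rw [Metric.closedBall_zero]; exact Set.singleton_subset_iff.2 hx₀⟩
    obtain ⟨ρ', hρ'S, hρ'⟩ := exists_lt_of_lt_csSup hSne
      (show ρfun k < sSup {ρ : ℝ | 0 ≤ ρ ∧ ∃ c : EuclideanSpace ℝ (Fin n),
        Metric.closedBall c ρ ⊆ X} from hρlt k)
    obtain ⟨h0', c, hc⟩ := hρ'S
    exact ⟨c, (closedBall_subset_closedBall hρ'.le).trans hc⟩
  have htdec : ∀ k, t (k+1) ⊆ t k := fun k c hc =>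
    (closedBall_subset_closedBall (hρmono k)).trans hc
  have ht0 : IsCompact (t 0) := by
    apply hX.of_isClosed_subset (htcl 0)
    intro c hc
    have := (htch 0 c).1 hc 0 (by simpa using (hρpos 0).le)
    simpa using this
  obtain ⟨a, ha⟩ := IsCompact.nonempty_iInter_of_sequence_nonempty_isCompact_isClosed t htdec htne ht0 htcl
  refine ⟨a, fun z hz => ?_⟩
  rw [mem_closedBall, dist_eq_norm] at hz
  have hzk : ∀ k, a + (ρfun k / r) • (z - a) ∈ X := by
    intro k
    have hak : a ∈ t k := Set.mem_iInter.1 ha k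
    refine (htch k a).1 hak _ ?_
    rw [norm_smul, Real.norm_eq_abs, abs_of_nonneg (div_nonneg (hρpos k).le hr0)]
    calc ρfun k / r * ‖z - a‖ ≤ ρfun k / r * r :=
          mul_le_mul_of_nonneg_left hz (div_nonneg (hρpos k).le hr0)
      _ = ρfun k := div_mul_cancel₀ _ hlt.ne'
  have h3 : ∀ k : ℕ, ρfun k / r = 1 - 1/((k:ℝ)+2) := by
    intro k
    simp only [hρfun]
    field_simp
  have h2 : Filter.Tendsto (fun k : ℕ => 1/((k:ℝ)+2)) Filter.atTop (nhds 0) := by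
    have h := (tendsto_one_div_add_atTop_nhds_zero_nat (𝕜 := ℝ)).comp (Filter.tendsto_add_atTop_nat 1)
    convert h using 1
    ext k
    simp only [Function.comp_apply]
    push_cast
    ring
  have h1 : Filter.Tendsto (fun k : ℕ => ρfun k / r) Filter.atTop (nhds 1) := by
    simp only [h3]
    simpa using tendsto_const_nhds.sub h2
  have hlim : Filter.Tendsto (fun k => a + (ρfun k / r) • (z - a)) Filter.atTop (nhds z) := by
    have h4 := Filter.Tendsto.const_add a (h1.smul_const (z - a))
    simpa using h4
  exact hX.isClosed.mem_of_tendsto hlim (Filter.Eventually.of_forall hzk)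

/-- combination set facts -/
theorem combo_compact {K C : Set (EuclideanSpace ℝ (Fin n))} (hK : IsCompact K)
    (hC : IsCompact C) (lam : ℝ) :
    IsCompact (Set.image2 (fun x y => lam • x + (1 - lam) • y) K C) := by
  rw [← Set.image_uncurry_prod]
  exact (hK.prod hC).image (by fun_prop)

theorem combo_subset {K C : Set (EuclideanSpace ℝ (Fin n))} (hKC : K ⊆ C) (hCcv : Convex ℝ C)
    {lam : ℝ} (h0 : 0 ≤ lam) (h1 : lam ≤ 1) :
    Set.image2 (fun x y => lam • x + (1 - lam) • y) K C ⊆ C := by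
  rintro z ⟨x, hx, y, hy, rfl⟩
  exact hCcv (hKC hx) hy h0 (by linarith) (by ring)

theorem subset_combo {K C : Set (EuclideanSpace ℝ (Fin n))} (hKC : K ⊆ C) (lam : ℝ) :
    K ⊆ Set.image2 (fun x y => lam • x + (1 - lam) • y) K C := by
  intro x hx
  exact ⟨x, hx, x, hKC hx, by module⟩

theorem hsup_combo {K C : Set (EuclideanSpace ℝ (Fin n))} (hKcp : IsCompact K) (hKne : K.Nonempty)
    (hCcp : IsCompact C) (hCne : C.Nonempty) {lam : ℝ} (h0 : 0 ≤ lam) (h1 : lam ≤ 1)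
    (u : EuclideanSpace ℝ (Fin n)) :
    hsup u (Set.image2 (fun x y => lam • x + (1 - lam) • y) K C) =
      lam * hsup u K + (1 - lam) * hsup u C := by
  apply le_antisymm
  · apply hsup_le (hKne.image2 hCne)
    rintro z ⟨x, hx, y, hy, rfl⟩
    rw [inner_add_right, real_inner_smul_right, real_inner_smul_right]
    have h2 := le_hsup (u := u) hKcp.isBounded hx
    have h3 := le_hsup (u := u) hCcp.isBounded hy
    have h4 := mul_le_mul_of_nonneg_left h2 h0
    have h5 := mul_le_mul_of_nonneg_left h3 (by linarith : (0:ℝ) ≤ 1 - lam)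
    linarith
  · obtain ⟨xs, hxs, hxse⟩ := hsup_attain (u := u) hKcp hKne
    obtain ⟨ys, hys, hyse⟩ := hsup_attain (u := u) hCcp hCne
    have hmem : lam • xs + (1 - lam) • ys ∈
        Set.image2 (fun x y => lam • x + (1 - lam) • y) K C := ⟨xs, hxs, ys, hys, rfl⟩
    have h6 := le_hsup (u := u) (combo_compact hKcp hCcp lam).isBounded hmem
    rw [inner_add_right, real_inner_smul_right, real_inner_smul_right] at h6
    rw [hxse, hyse]
    linarith

/-- separation -/
theorem sep_point {X : Set (EuclideanSpace ℝ (Fin n))} (hX : IsCompact X) (hcv : Convex ℝ X)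
    (hne : X.Nonempty) {z : EuclideanSpace ℝ (Fin n)} (hz : z ∉ X) :
    ∃ u : EuclideanSpace ℝ (Fin n), ‖u‖ = 1 ∧ ∀ x ∈ X, (inner ℝ u x : ℝ) < (inner ℝ u z : ℝ) := by
  obtain ⟨f, s, hfs, hsz⟩ := geometric_hahn_banach_closed_point hcv hX.isClosed hz
  set v := (InnerProductSpace.toDual ℝ (EuclideanSpace ℝ (Fin n))).symm f with hv
  have hfv : ∀ x, f x = (inner ℝ v x : ℝ) := by
    intro x
    rw [hv, InnerProductSpace.toDual_symm_apply]
  have hvne : v ≠ 0 := by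
    obtain ⟨x₀, hx₀⟩ := hne
    intro h
    have h1 := hfs x₀ hx₀
    rw [hfv, h, inner_zero_left] at h1
    rw [hfv, h, inner_zero_left] at hsz
    linarith
  refine ⟨‖v‖⁻¹ • v, ?_, ?_⟩
  · rw [norm_smul, norm_inv, norm_norm, inv_mul_cancel₀ (norm_ne_zero_iff.2 hvne)]
  · intro x hx
    rw [real_inner_smul_left, real_inner_smul_left]
    have h1 : (inner ℝ v x : ℝ) < inner ℝ v z := by
      rw [← hfv, ← hfv]; exact lt_trans (hfs x hx) hsz
    have h2 : (0:ℝ) < ‖v‖⁻¹ := inv_pos.2 (norm_pos_iff.2 hvne)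
    nlinarith

theorem ball_subset_of_support {X : Set (EuclideanSpace ℝ (Fin n))} (hX : IsCompact X)
    (hcv : Convex ℝ X) (hne : X.Nonempty) {a : EuclideanSpace ℝ (Fin n)} {ρ : ℝ} (h0 : 0 ≤ ρ)
    (h : ∀ u : EuclideanSpace ℝ (Fin n), ‖u‖ = 1 → (inner ℝ u a : ℝ) + ρ ≤ hsup u X) :
    closedBall a ρ ⊆ X := by
  intro z hz
  by_contra hzX
  obtain ⟨u, hu1, husep⟩ := sep_point hX hcv hne hzX
  have hcont : Continuous fun x : EuclideanSpace ℝ (Fin n) => (inner ℝ u x : ℝ) :=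
    Continuous.inner continuous_const continuous_id
  obtain ⟨xm, hxm, hmax⟩ := hX.exists_isMaxOn hne hcont.continuousOn
  have h1 : hsup u X < (inner ℝ u z : ℝ) := by
    have : hsup u X ≤ (inner ℝ u xm : ℝ) := csSup_le (hne.image _)
      (by rintro b ⟨x, hx, rfl⟩; exact hmax hx)
    exact lt_of_le_of_lt this (husep xm hxm)
  have h2 : (inner ℝ u z : ℝ) ≤ inner ℝ u a + ρ := by
    have h3 : (inner ℝ u (z - a) : ℝ) ≤ ρ := by
      calc (inner ℝ u (z-a) : ℝ) ≤ ‖u‖ * ‖z - a‖ := real_inner_le_norm _ _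
        _ ≤ ρ := by
            rw [hu1, one_mul, ← dist_eq_norm]
            exact mem_closedBall.1 hz
    rw [inner_sub_right] at h3
    linarith
  have h4 := h u hu1
  linarith

theorem hsup_continuous {X : Set (EuclideanSpace ℝ (Fin n))} (hX : IsCompact X)
    (hne : X.Nonempty) : Continuous fun u => hsup u X := by
  obtain ⟨M, hM⟩ := hX.isBounded.exists_norm_le
  have hM0 : 0 ≤ M := le_trans (norm_nonneg _) (hM _ hne.choose_spec)
  have key : ∀ u u' : EuclideanSpace ℝ (Fin n), hsup u X ≤ hsup u' X + M * ‖u - u'‖ := by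
    intro u u'
    apply hsup_le hne
    intro x hx
    have h1 : (inner ℝ u x : ℝ) = inner ℝ u' x + inner ℝ (u - u') x := by
      have he : u' + (u - u') = u := by abel
      rw [← inner_add_left, he]
    rw [h1]
    have h2 : (inner ℝ (u - u') x : ℝ) ≤ ‖u - u'‖ * ‖x‖ := real_inner_le_norm _ _
    have h3 : ‖u - u'‖ * ‖x‖ ≤ M * ‖u - u'‖ := by
      rw [mul_comm]
      exact mul_le_mul_of_nonneg_right (hM x hx) (norm_nonneg _)
    have h4 := le_hsup (u := u') hX.isBounded hx
    linarith
  apply LipschitzWith.continuous (K := Real.toNNReal M)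
  apply LipschitzWith.of_dist_le_mul
  intro u u'
  rw [Real.dist_eq, dist_eq_norm, Real.coe_toNNReal _ hM0]
  rw [abs_le]
  constructor
  · have := key u' u
    rw [norm_sub_rev u' u] at this
    linarith
  · linarith [key u u']

/-- Key structural lemma: for a maximal inscribed ball of `K` centered at `a` and any vector `b`,
there is a contact direction `u` (unit, with support value `⟨u,a⟩ + r`) with `⟨u, b⟩ ≤ 0`. -/
theorem contact_exists {K : Set (EuclideanSpace ℝ (Fin n))} (hK : IsCompact K)
    (hcv : Convex ℝ K) (hne : K.Nonempty)
    (hu : ∃ u : EuclideanSpace ℝ (Fin n), ‖u‖ = 1) {a : EuclideanSpace ℝ (Fin n)}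
    (hball : closedBall a (inradius K) ⊆ K) (b : EuclideanSpace ℝ (Fin n)) :
    ∃ u : EuclideanSpace ℝ (Fin n), (‖u‖ = 1 ∧ hsup u K = (inner ℝ u a : ℝ) + inradius K)
      ∧ (inner ℝ u b : ℝ) ≤ 0 := by
  set r := inradius K with hrdef
  have hr0 : 0 ≤ r := inr_nonneg hu hK.isBounded hne
  set φ : EuclideanSpace ℝ (Fin n) → ℝ := fun u => hsup u K - inner ℝ u a - r with hφdef
  set T := {u : EuclideanSpace ℝ (Fin n) | ‖u‖ = 1 ∧ hsup u K = (inner ℝ u a : ℝ) + r} with hTdef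
  have hφcont : Continuous φ := by
    apply Continuous.sub
    apply Continuous.sub (hsup_continuous hK hne)
    · exact Continuous.inner continuous_id continuous_const
    · exact continuous_const
  have hφ0 : ∀ u : EuclideanSpace ℝ (Fin n), ‖u‖ = 1 → 0 ≤ φ u := by
    intro u hu1
    have h1 : a + r • u ∈ K := hball (mem_ball_smul_unit hu1 hr0)
    have h2 := le_hsup (u := u) hK.isBounded h1
    rw [inner_add_right, real_inner_smul_right, real_inner_self_eq_norm_sq, hu1] at h2
    simp only [hφdef]
    nlinarith
  have hTchar : T = sphere (0 : EuclideanSpace ℝ (Fin n)) 1 ∩ φ ⁻¹' {0} := by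
    ext u
    simp only [hTdef, Set.mem_setOf_eq, Set.mem_inter_iff, Set.mem_preimage,
      Set.mem_singleton_iff, mem_sphere_zero_iff_norm, hφdef]
    constructor
    · rintro ⟨h1, h2⟩; exact ⟨h1, by linarith⟩
    · rintro ⟨h1, h2⟩; exact ⟨h1, by linarith⟩
  have hTcp : IsCompact T := by
    rw [hTchar]
    exact (isCompact_sphere _ _).inter_right (IsClosed.preimage hφcont isClosed_singleton)
  by_contra h0mem
  push_neg at h0mem
  have hbpos : ∀ u ∈ T, 0 < (inner ℝ u b : ℝ) := by
    intro u huT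
    obtain ⟨h1, h2⟩ := huT
    exact h0mem u ⟨h1, h2⟩
  -- find v with ⟪v, u⟫ ≤ -2 on T
  have hsep : ∃ v : EuclideanSpace ℝ (Fin n), ∀ u ∈ T, (inner ℝ v u : ℝ) ≤ -2 := by
    rcases Set.eq_empty_or_nonempty T with hT | hTne
    · exact ⟨hu.choose, by simp [hT]⟩
    · have hbc : Continuous fun u : EuclideanSpace ℝ (Fin n) => (inner ℝ u b : ℝ) :=
        Continuous.inner continuous_id continuous_const
      obtain ⟨ud, hudT, hud⟩ := hTcp.exists_isMinOn hTne hbc.continuousOn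
      set δ := (inner ℝ ud b : ℝ) with hδdef
      have hδpos : 0 < δ := hbpos ud hudT
      refine ⟨(-(2/δ)) • b, fun u huT => ?_⟩
      have h1 : δ ≤ (inner ℝ b u : ℝ) := by
        rw [real_inner_comm]; exact hud huT
      rw [real_inner_smul_left]
      have h2 : 0 < 2/δ := by positivity
      have h3 : 2/δ * δ = 2 := by field_simp
      nlinarith
  obtain ⟨v, hv⟩ := hsep
  -- choose ε > 0 with ε * (⟪u,v⟫ + 1) ≤ φ u for all unit u
  set A := sphere (0 : EuclideanSpace ℝ (Fin n)) 1 ∩ {u | -1 ≤ (inner ℝ v u : ℝ)} with hAdef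
  have hAcp : IsCompact A :=
    (isCompact_sphere _ _).inter_right
      (isClosed_le continuous_const (Continuous.inner continuous_const continuous_id))
  have hAφpos : ∀ u ∈ A, 0 < φ u := by
    rintro u ⟨hu1, hu2⟩
    rw [mem_sphere_zero_iff_norm] at hu1
    rcases lt_or_eq_of_le (hφ0 u hu1) with h | h
    · exact h
    · exfalso
      have huT : u ∈ T := by
        rw [hTdef]
        refine ⟨hu1, ?_⟩
        simp only [hφdef] at h
        linarith
      have := hv u huT
      simp only [Set.mem_setOf_eq] at hu2
      linarith
  have hεex : ∃ ε : ℝ, 0 < ε ∧ ∀ u : EuclideanSpace ℝ (Fin n), ‖u‖ = 1 →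
      ε * ((inner ℝ u v : ℝ) + 1) ≤ φ u := by
    rcases Set.eq_empty_or_nonempty A with hA | hAne
    · refine ⟨1, one_pos, fun u hu1 => ?_⟩
      have huA : u ∉ A := by rw [hA]; exact Set.notMem_empty u
      simp only [hAdef, Set.mem_inter_iff, mem_sphere_zero_iff_norm, Set.mem_setOf_eq,
        not_and, not_le] at huA
      have h5 := huA hu1
      rw [real_inner_comm] at h5
      have h6 : (1:ℝ) * ((inner ℝ u v : ℝ) + 1) < 0 := by nlinarith
      exact le_trans h6.le (hφ0 u hu1)
    · obtain ⟨um, humA, hum⟩ := hAcp.exists_isMinOn hAne hφcont.continuousOn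
      set μ := φ um with hμdef
      have hμpos : 0 < μ := hAφpos um humA
      refine ⟨μ / (‖v‖ + 1), by positivity, fun u hu1 => ?_⟩
      by_cases huA : u ∈ A
      · have h1 : (inner ℝ u v : ℝ) + 1 ≤ ‖v‖ + 1 := by
          have := real_inner_le_norm u v
          rw [hu1, one_mul] at this
          linarith
        have h2 : μ ≤ φ u := hum huA
        have h3 : 0 < ‖v‖ + 1 := by positivity
        calc μ / (‖v‖ + 1) * ((inner ℝ u v : ℝ) + 1) ≤ μ / (‖v‖ + 1) * (‖v‖ + 1) := by
              apply mul_le_mul_of_nonneg_left h1 (by positivity)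
          _ = μ := div_mul_cancel₀ _ h3.ne'
          _ ≤ φ u := h2
      · simp only [hAdef, Set.mem_inter_iff, mem_sphere_zero_iff_norm, Set.mem_setOf_eq,
          not_and, not_le] at huA
        have h5 := huA hu1
        rw [real_inner_comm] at h5
        have h4 : 0 < μ / (‖v‖ + 1) := by positivity
        have h6 : (inner ℝ u v : ℝ) + 1 < 0 := by linarith
        have h7 : μ / (‖v‖ + 1) * ((inner ℝ u v : ℝ) + 1) < 0 := mul_neg_of_pos_of_neg h4 h6
        exact le_trans h7.le (hφ0 u hu1)
  obtain ⟨ε, hεpos, hε⟩ := hεex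
  have hsub : closedBall (a + ε • v) (r + ε) ⊆ K := by
    apply ball_subset_of_support hK hcv hne (by linarith)
    intro u hu1
    have h1 := hε u hu1
    simp only [hφdef] at h1
    rw [inner_add_right, real_inner_smul_right]
    have h8 : (inner ℝ u v : ℝ) = inner ℝ v u := real_inner_comm v u
    nlinarith
  have := le_inr hu hK.isBounded (by linarith : (0:ℝ) ≤ r + ε) hsub
  rw [← hrdef] at this
  linarith

/-- width facts -/
theorem width_eq (X : Set (EuclideanSpace ℝ (Fin n))) :
    width X = sInf {b : ℝ | ∃ u : EuclideanSpace ℝ (Fin n), ‖u‖ = 1 ∧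
      b = hsup u X + hsup (-u) X} := by
  unfold width
  congr 1
  ext b
  simp only [Set.mem_setOf_eq]
  constructor
  · rintro ⟨u, hu, rfl⟩
    exact ⟨u, hu, by rw [sInf_img]; unfold hsup; ring⟩
  · rintro ⟨u, hu, rfl⟩
    exact ⟨u, hu, by rw [sInf_img]; unfold hsup; ring⟩

theorem breadth_nonneg {X : Set (EuclideanSpace ℝ (Fin n))} (hX : Bornology.IsBounded X)
    (hne : X.Nonempty) (u : EuclideanSpace ℝ (Fin n)) : 0 ≤ hsup u X + hsup (-u) X := by
  obtain ⟨x₀, hx₀⟩ := hne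
  have h1 := le_hsup (u := u) hX hx₀
  have h2 := le_hsup (u := -u) hX hx₀
  rw [inner_neg_left] at h2
  linarith

theorem width_le_breadth {X : Set (EuclideanSpace ℝ (Fin n))} (hX : Bornology.IsBounded X)
    (hne : X.Nonempty) {u : EuclideanSpace ℝ (Fin n)} (hu : ‖u‖ = 1) :
    width X ≤ hsup u X + hsup (-u) X := by
  rw [width_eq]
  apply csInf_le
  · refine ⟨0, ?_⟩
    rintro b ⟨u', hu', rfl⟩
    exact breadth_nonneg hX hne u'
  · exact ⟨u, hu, rfl⟩

theorem breadth_le_diam {X : Set (EuclideanSpace ℝ (Fin n))} (hX : IsCompact X)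
    (hne : X.Nonempty) {u : EuclideanSpace ℝ (Fin n)} (hu : ‖u‖ = 1) :
    hsup u X + hsup (-u) X ≤ Metric.diam X := by
  obtain ⟨xs, hxs, hxse⟩ := hsup_attain (u := u) hX hne
  obtain ⟨ys, hys, hyse⟩ := hsup_attain (u := -u) hX hne
  rw [hxse, hyse, inner_neg_left]
  have h1 : (inner ℝ u (xs - ys) : ℝ) ≤ ‖u‖ * ‖xs - ys‖ := real_inner_le_norm _ _
  rw [inner_sub_right, hu, one_mul] at h1
  have h2 : ‖xs - ys‖ ≤ Metric.diam X := by
    rw [← dist_eq_norm]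
    exact Metric.dist_le_diam_of_mem hX.isBounded hxs hys
  linarith

end ScottAux

set_option maxHeartbeats 1000000 in
open ScottAux in
theorem scott_completion_combination (n : ℕ) (K C : Set (EuclideanSpace ℝ (Fin n)))
    (hKne : K.Nonempty) (hKcp : IsCompact K) (hKcv : Convex ℝ K)
    (hCne : C.Nonempty) (hCcp : IsCompact C) (hCcv : Convex ℝ C)
    (hKC : K ⊆ C) (hDC : sDiam K = sDiam C) (hwC : sDiam C = width C)
    (hRC : circumradius K = circumradius C)
    (hw : width K = inradius K + circumradius K) :
    ∀ lam ∈ Set.Icc (0 : ℝ) 1,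
      inradius (Set.image2 (fun x y => lam • x + (1 - lam) • y) K C) =
        lam * inradius K + (1 - lam) * inradius C ∧
      circumradius (Set.image2 (fun x y => lam • x + (1 - lam) • y) K C) =
        circumradius K ∧
      sDiam (Set.image2 (fun x y => lam • x + (1 - lam) • y) K C) = sDiam K ∧
      width (Set.image2 (fun x y => lam • x + (1 - lam) • y) K C) =
        lam * width K + (1 - lam) * width C ∧
      width (Set.image2 (fun x y => lam • x + (1 - lam) • y) K C) =
        inradius (Set.image2 (fun x y => lam • x + (1 - lam) • y) K C) +
          circumradius (Set.image2 (fun x y => lam • x + (1 - lam) • y) K C) := by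
  intro lam hlam
  obtain ⟨hl0, hl1⟩ := hlam
  set Kl := Set.image2 (fun x y => lam • x + (1 - lam) • y) K C with hKldef
  by_cases hn : ∃ u : EuclideanSpace ℝ (Fin n), ‖u‖ = 1
  case neg =>
    -- degenerate case: no unit vector, the space is trivial
    have hall : ∀ v : EuclideanSpace ℝ (Fin n), v = 0 := by
      intro v
      by_contra hv
      exact hn ⟨‖v‖⁻¹ • v, by
        rw [norm_smul, norm_inv, norm_norm, inv_mul_cancel₀ (norm_ne_zero_iff.2 hv)]⟩
    have hsingle : ∀ X : Set (EuclideanSpace ℝ (Fin n)), X.Nonempty → X = {0} := by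
      rintro X ⟨x, hx⟩
      apply Set.eq_singleton_iff_unique_mem.2
      exact ⟨(hall x) ▸ hx, fun y _ => hall y⟩
    have hK0 : K = {0} := hsingle K hKne
    have hC0 : C = {0} := hsingle C hCne
    have hKl0 : Kl = {0} := hsingle Kl (hKne.image2 hCne)
    have hinr : inradius ({0} : Set (EuclideanSpace ℝ (Fin n))) = 0 := by
      unfold inradius
      have hset : {ρ : ℝ | 0 ≤ ρ ∧ ∃ c : EuclideanSpace ℝ (Fin n),
          Metric.closedBall c ρ ⊆ {0}} = Set.Ici 0 := by
        ext ρ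
        simp only [Set.mem_setOf_eq, Set.mem_Ici]
        constructor
        · rintro ⟨h, -⟩; exact h
        · intro h
          exact ⟨h, 0, fun z _ => by rw [hall z]; exact Set.mem_singleton 0⟩
      rw [hset]
      apply Real.sSup_of_not_bddAbove
      rintro ⟨B, hB⟩
      have h1 : max B 0 + 1 ∈ Set.Ici (0:ℝ) := by
        simp only [Set.mem_Ici]
        have := le_max_right B 0
        linarith
      have h2 := hB h1
      have h3 := le_max_left B 0
      linarith
    have hcir : circumradius ({0} : Set (EuclideanSpace ℝ (Fin n))) = 0 := by
      unfold circumradius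
      have hset : {ρ : ℝ | 0 ≤ ρ ∧ ∃ c : EuclideanSpace ℝ (Fin n),
          ({0} : Set (EuclideanSpace ℝ (Fin n))) ⊆ Metric.closedBall c ρ} = Set.Ici 0 := by
        ext ρ
        simp only [Set.mem_setOf_eq, Set.mem_Ici]
        constructor
        · rintro ⟨h, -⟩; exact h
        · intro h
          refine ⟨h, 0, ?_⟩
          intro z hz
          rw [Set.mem_singleton_iff] at hz
          rw [hz]
          exact mem_closedBall_self h
      rw [hset]
      exact csInf_Ici
    have hwid : ∀ X : Set (EuclideanSpace ℝ (Fin n)), width X = 0 := by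
      intro X
      unfold width
      have hset : {b : ℝ | ∃ u : EuclideanSpace ℝ (Fin n), ‖u‖ = 1 ∧
          b = sSup ((fun x => (inner ℝ u x : ℝ)) '' X) - sInf ((fun x => (inner ℝ u x : ℝ)) '' X)}
          = ∅ := by
        ext b
        simp only [Set.mem_setOf_eq, Set.mem_empty_iff_false, iff_false]
        rintro ⟨u, hu, -⟩
        exact hn ⟨u, hu⟩
      rw [hset]
      exact Real.sInf_empty
    have hdiam : sDiam ({0} : Set (EuclideanSpace ℝ (Fin n))) = 0 := by
      unfold sDiam
      exact Metric.diam_singleton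
    refine ⟨?_, ?_, ?_, ?_, ?_⟩
    · rw [hK0, hC0, hKl0, hinr]; ring
    · rw [hK0, hKl0]
    · rw [hK0, hKl0]
    · rw [hwid, hwid, hwid]; ring
    · rw [hwid, hKl0, hinr, hcir]; ring
  case pos =>
  have hl1' : (0:ℝ) ≤ 1 - lam := by linarith
  -- basic facts about Kl
  have hKlcp : IsCompact Kl := combo_compact hKcp hCcp lam
  have hKlne : Kl.Nonempty := hKne.image2 hCne
  have hKKl : K ⊆ Kl := subset_combo hKC lam
  have hKlC : Kl ⊆ C := combo_subset hKC hCcv hl0 hl1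
  -- diameter
  have hdiam : sDiam Kl = sDiam K := by
    unfold sDiam at *
    apply le_antisymm
    · rw [hDC]
      exact Metric.diam_mono hKlC hCcp.isBounded
    · exact Metric.diam_mono hKKl hKlcp.isBounded
  -- circumradius
  have hcir : circumradius Kl = circumradius K := by
    apply le_antisymm
    · rw [hRC]
      exact circum_mono hKlC hCcp.isBounded hCne
    · exact circum_mono hKKl hKlcp.isBounded hKlne
  -- support function of Kl
  have hl : ∀ u : EuclideanSpace ℝ (Fin n),
      hsup u Kl = lam * hsup u K + (1 - lam) * hsup u C :=
    fun u => hsup_combo hKcp hKne hCcp hCne hl0 hl1 u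
  -- notation
  set D := sDiam K with hDdef
  set R := circumradius K with hRdef
  set rK := inradius K with hrKdef
  set rC := inradius C with hrCdef
  -- C has constant width D
  have hbC : ∀ u : EuclideanSpace ℝ (Fin n), ‖u‖ = 1 →
      hsup u C + hsup (-u) C = D := by
    intro u hu
    apply le_antisymm
    · have h1 := breadth_le_diam hCcp hCne hu
      have h2 : Metric.diam C = D := by
        have : sDiam C = D := hDC.symm
        exact this
      linarith
    · have h1 := width_le_breadth hCcp.isBounded hCne hu
      have h2 : width C = D := by rw [← hwC]; exact hDC.symm
      linarith
  -- width of Kl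
  have hwCD : width C = D := by rw [← hwC]; exact hDC.symm
  have hbKl : ∀ u : EuclideanSpace ℝ (Fin n), ‖u‖ = 1 →
      hsup u Kl + hsup (-u) Kl = lam * (hsup u K + hsup (-u) K) + (1 - lam) * D := by
    intro u hu
    rw [hl u, hl (-u)]
    have h := hbC u hu
    linear_combination (1 - lam) * h
  have hbsetKne : {b : ℝ | ∃ u : EuclideanSpace ℝ (Fin n), ‖u‖ = 1 ∧
      b = hsup u K + hsup (-u) K}.Nonempty := by
    obtain ⟨u₀, hu₀⟩ := hn
    exact ⟨_, u₀, hu₀, rfl⟩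
  have hwid : width Kl = lam * width K + (1 - lam) * D := by
    apply le_antisymm
    · apply le_of_forall_pos_le_add
      intro ε hε
      have h2 : sInf {b : ℝ | ∃ u : EuclideanSpace ℝ (Fin n), ‖u‖ = 1 ∧
          b = hsup u K + hsup (-u) K} < width K + ε := by
        rw [← width_eq]
        linarith
      obtain ⟨b, hbmem, hblt⟩ := exists_lt_of_csInf_lt hbsetKne h2
      obtain ⟨u, hu, rfl⟩ := hbmem
      have h3 := width_le_breadth hKlcp.isBounded hKlne hu
      rw [hbKl u hu] at h3
      have h4 := mul_le_mul_of_nonneg_left hblt.le hl0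
      nlinarith
    · rw [width_eq Kl]
      apply le_csInf
      · obtain ⟨u₀, hu₀⟩ := hn
        exact ⟨_, u₀, hu₀, rfl⟩
      · rintro b ⟨u, hu, rfl⟩
        rw [hbKl u hu]
        have h1 := width_le_breadth hKcp.isBounded hKne hu
        have h2 := mul_le_mul_of_nonneg_left h1 hl0
        linarith
  -- circumball of C
  obtain ⟨m, hm⟩ := circum_attain hCcp hCne
  rw [← hRC] at hm
  have hRD : R ≤ D := by
    obtain ⟨x₀, hx₀⟩ := hKne
    exact circum_le Metric.diam_nonneg (subset_ball_diam hKcp.isBounded hx₀)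
  have hR0 : 0 ≤ R := circum_nonneg K
  -- the inradius of C equals D - R
  have hrCsub : closedBall m (D - R) ⊆ C := by
    apply ball_subset_of_support hCcp hCcv hCne (by linarith)
    intro u hu
    have h1 : hsup (-u) C ≤ (inner ℝ (-u) m : ℝ) + R :=
      hsup_le_ball hCne hm (by rw [norm_neg]; exact hu)
    have h2 := hbC u hu
    rw [inner_neg_left] at h1
    linarith
  have hrhoD : ∀ ρ (c : EuclideanSpace ℝ (Fin n)), 0 ≤ ρ → closedBall c ρ ⊆ C → ρ ≤ D - R := by
    intro ρ c hρ0 hc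
    obtain ⟨u₀, hu₀⟩ := hn
    have hρD : 2 * ρ ≤ D := by
      have h1 : c + ρ • u₀ ∈ C := hc (mem_ball_smul_unit hu₀ hρ0)
      have h2 : c + (-ρ) • u₀ ∈ C := hc (by
        rw [mem_closedBall, dist_smul_unit hu₀, abs_neg, abs_of_nonneg hρ0])
      have h3 : dist (c + ρ • u₀) (c + (-ρ) • u₀) = 2 * ρ := by
        rw [dist_eq_norm]
        have he : (c + ρ • u₀) - (c + (-ρ) • u₀) = (2*ρ) • u₀ := by module
        rw [he, norm_smul, hu₀, mul_one, Real.norm_eq_abs,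
          abs_of_nonneg (by linarith : (0:ℝ) ≤ 2*ρ)]
      have h4 := Metric.dist_le_diam_of_mem hCcp.isBounded h1 h2
      rw [h3] at h4
      have h5 : Metric.diam C = D := hDC.symm
      linarith
    have hsub2 : C ⊆ closedBall c (D - ρ) := by
      intro x hx
      rw [mem_closedBall]
      by_cases hxc : x = c
      · rw [hxc, dist_self]; linarith
      · set d := ‖x - c‖ with hddef
        have hd0 : 0 < d := by
          rw [hddef]
          exact norm_pos_iff.2 (sub_ne_zero.2 hxc)
        set y := c - (ρ/d) • (x - c) with hydef
        have hy : y ∈ closedBall c ρ := by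
          rw [mem_closedBall, dist_eq_norm, hydef]
          have he : c - (ρ/d) • (x - c) - c = -((ρ/d) • (x - c)) := by abel
          rw [he, norm_neg, norm_smul, Real.norm_eq_abs,
            abs_of_nonneg (div_nonneg hρ0 hd0.le), ← hddef]
          rw [div_mul_cancel₀ _ hd0.ne']
        have hyC : y ∈ C := hc hy
        have hdist : dist x y = d + ρ := by
          rw [dist_eq_norm, hydef]
          have he : x - (c - (ρ/d) • (x - c)) = (1 + ρ/d) • (x - c) := by module
          rw [he, norm_smul, Real.norm_eq_abs, ← hddef,
            abs_of_nonneg (by positivity : (0:ℝ) ≤ 1 + ρ/d)]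
          field_simp
        have h6 := Metric.dist_le_diam_of_mem hCcp.isBounded hx hyC
        have h7 : Metric.diam C = D := hDC.symm
        rw [hdist, h7] at h6
        rw [dist_eq_norm, ← hddef]
        linarith
    have h8 : R ≤ D - ρ := by
      rw [hRC]
      exact circum_le (by linarith) hsub2
    linarith
  have hrCeq : rC = D - R := by
    apply le_antisymm
    · exact inr_le (by linarith) hrhoD
    · exact le_inr hn hCcp.isBounded (by linarith) hrCsub
  -- maximal inscribed ball of K
  obtain ⟨aK, haK⟩ := inr_attain hKcp hKne hn
  have hrK0 : 0 ≤ rK := inr_nonneg hn hKcp.isBounded hKne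
  have hrC0 : 0 ≤ rC := inr_nonneg hn hCcp.isBounded hCne
  have htarget0 : 0 ≤ lam * rK + (1 - lam) * rC := by positivity
  -- inradius of Kl : upper bound
  have hinr_ub : inradius Kl ≤ lam * rK + (1 - lam) * rC := by
    apply inr_le htarget0
    intro ρ a hρ0 hball
    obtain ⟨u, ⟨hu1, hcontact⟩, hub⟩ := contact_exists hKcp hKcv hKne hn haK (aK - a)
    -- hcontact : hsup u K = ⟪u, aK⟫ + rK
    have hwK : width K = rK + R := hw
    have hbuK : width K ≤ hsup u K + hsup (-u) K :=
      width_le_breadth hKcp.isBounded hKne hu1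
    -- hsup (-u) K ≥ R - ⟪u, aK⟫
    have h1 : R - (inner ℝ u aK : ℝ) ≤ hsup (-u) K := by
      rw [hcontact] at hbuK
      rw [hwK] at hbuK
      linarith
    -- hsup u C ≤ D - R + ⟪u, aK⟫
    have h2 : hsup u C ≤ D - R + (inner ℝ u aK : ℝ) := by
      have h3 : hsup (-u) K ≤ hsup (-u) C := hsup_mono hKne hCcp.isBounded hKC
      have h4 := hbC u hu1
      linarith
    -- ρ + ⟪u, a⟫ ≤ hsup u Kl
    have h5 : ρ + (inner ℝ u a : ℝ) ≤ hsup u Kl := by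
      have h6 : a + ρ • u ∈ Kl := hball (mem_ball_smul_unit hu1 hρ0)
      have h7 := le_hsup (u := u) hKlcp.isBounded h6
      rw [inner_add_right, real_inner_smul_right, real_inner_self_eq_norm_sq, hu1] at h7
      nlinarith
    rw [hl u] at h5
    have hmul2 := mul_le_mul_of_nonneg_left h2 hl1'
    have e1 : lam * hsup u K = lam * (inner ℝ u aK : ℝ) + lam * rK := by
      rw [hcontact]; ring
    have e2 : (1 - lam) * (D - R + (inner ℝ u aK : ℝ)) =
        (1 - lam) * (D - R) + (1 - lam) * (inner ℝ u aK : ℝ) := by ring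
    rw [inner_sub_right] at hub
    rw [hrCeq]
    linarith only [h5, hmul2, e1, e2, hub]
  -- inradius of Kl : lower bound
  have hinr_lb : lam * rK + (1 - lam) * rC ≤ inradius Kl := by
    apply le_inr hn (hCcp.isBounded.subset hKlC) htarget0
    intro z hz
    set ctr := lam • aK + (1 - lam) • m with hctr
    set s := lam * rK + (1 - lam) * rC with hsdef
    set v := z - ctr with hvdef
    have hvnorm : ‖v‖ ≤ s := by
      rw [hvdef, ← dist_eq_norm]
      exact mem_closedBall.1 hz
    have haKK : aK ∈ K := haK (mem_closedBall_self hrK0)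
    have hmC : m ∈ C := by
      apply hrCsub
      apply mem_closedBall_self
      linarith [hrCeq ▸ hrC0]
    rcases eq_or_lt_of_le htarget0 with hs0 | hspos
    · -- s = 0 : z = ctr
      have hz0 : z = ctr := by
        have h1 : ‖v‖ ≤ 0 := by linarith [hvnorm, hs0.ge]
        have h2 : v = 0 := norm_le_zero_iff.1 h1
        rw [hvdef] at h2
        have := sub_eq_zero.1 h2
        exact this
      rw [hz0, hctr]
      exact ⟨aK, haKK, m, hmC, rfl⟩
    · set x := aK + (rK/s) • v with hxdef
      set y := m + (rC/s) • v with hydef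
      have hxK : x ∈ K := by
        apply haK
        rw [hxdef, mem_closedBall, dist_eq_norm]
        have he : aK + (rK/s) • v - aK = (rK/s) • v := by abel
        rw [he, norm_smul, Real.norm_eq_abs, abs_of_nonneg (div_nonneg hrK0 hspos.le)]
        calc rK/s * ‖v‖ ≤ rK/s * s := mul_le_mul_of_nonneg_left hvnorm (div_nonneg hrK0 hspos.le)
          _ = rK := div_mul_cancel₀ _ hspos.ne'
      have hyC : y ∈ C := by
        apply hrCsub
        rw [hydef, mem_closedBall, dist_eq_norm]
        have he : m + (rC/s) • v - m = (rC/s) • v := by abel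
        rw [he, norm_smul, Real.norm_eq_abs, abs_of_nonneg (div_nonneg hrC0 hspos.le)]
        rw [← hrCeq]
        calc rC/s * ‖v‖ ≤ rC/s * s := mul_le_mul_of_nonneg_left hvnorm (div_nonneg hrC0 hspos.le)
          _ = rC := div_mul_cancel₀ _ hspos.ne'
      refine ⟨x, hxK, y, hyC, ?_⟩
      show lam • x + (1 - lam) • y = z
      have hcoef : lam * (rK/s) + (1 - lam) * (rC/s) = 1 := by
        field_simp [hsdef]
        linarith [hsdef]
      have hzv : z = ctr + v := by rw [hvdef]; abel
      have hkey : lam • x + (1 - lam) • y =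
          ctr + (lam * (rK/s) + (1 - lam) * (rC/s)) • v := by
        rw [hxdef, hydef, hctr]
        module
      rw [hkey, hcoef, one_smul, ← hzv]
  have hinr : inradius Kl = lam * rK + (1 - lam) * rC := le_antisymm hinr_ub hinr_lb
  -- conclusion
  refine ⟨hinr, hcir, hdiam, ?_, ?_⟩
  · rw [hwid, hwCD]
  · rw [hwid, hinr, hcir, hw, hrCeq]
    ring
end

section
/- Let K be a convex body in Euclidean n-space ℝⁿ, c ∈ ℝⁿ and ρ ≥ 0 with closedBall(c, ρ) ⊆ K ⊆ closedBall(0,1), where ρ = r(K) is the inradius of K and R(K) = 1. Let p¹, …, p^k ∈ K be finitely many points with ‖pⁱ‖ = 1 for all i and 0 ∈ conv{p¹, …, p^k}, and set C := conv( {p¹, …, p^k} ∪ closedBall(c, ρ) ). Then D(C) = max( D(conv{p¹, …, p^k}), max_{i} ( ‖pⁱ − c‖ + ρ ) ). -/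
open Metric Set
open scoped RealInnerProductSpace

theorem diam_of_hull_points_ball (n : ℕ) (K : Set (EuclideanSpace ℝ (Fin n)))
    (hne : K.Nonempty) (hcp : IsCompact K) (hcv : Convex ℝ K)
    (c : EuclideanSpace ℝ (Fin n)) (ρ : ℝ) (hρ : 0 ≤ ρ)
    (hball : Metric.closedBall c ρ ⊆ K) (hsub : K ⊆ Metric.closedBall 0 1)
    (hρr : ρ = inradius K) (hR : circumradius K = 1)
    (k : ℕ) (hk : 0 < k) (p : Fin k → EuclideanSpace ℝ (Fin n))
    (hpK : ∀ i, p i ∈ K) (hpn : ∀ i, ‖p i‖ = 1)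
    (h0 : (0 : EuclideanSpace ℝ (Fin n)) ∈ convexHull ℝ (Set.range p)) :
    sDiam (convexHull ℝ (Set.range p ∪ Metric.closedBall c ρ)) =
      max (sDiam (convexHull ℝ (Set.range p))) (⨆ i, (‖p i - c‖ + ρ)) := by
  have hik : Nonempty (Fin k) := ⟨⟨0, hk⟩⟩
  have hbdd : BddAbove (Set.range fun i => ‖p i - c‖ + ρ) := Set.Finite.bddAbove (Set.finite_range _)
  -- key: ρ ≤ ‖p i - c‖ for all i
  have hkey : ∀ i, ρ ≤ ‖p i - c‖ := by
    intro i
    have hw : c + ρ • p i ∈ Metric.closedBall c ρ := by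
      simp [dist_eq_norm, norm_smul, hpn i, abs_of_nonneg hρ]
    have hw1 : ‖c + ρ • p i‖ ≤ 1 := by
      simpa [dist_eq_norm] using hsub (hball hw)
    have : ‖(1 + ρ) • p i‖ - ‖c + ρ • p i‖ ≤ ‖p i - c‖ := by
      have : (1 + ρ) • p i - (c + ρ • p i) = p i - c := by module
      calc ‖(1 + ρ) • p i‖ - ‖c + ρ • p i‖ ≤ ‖(1 + ρ) • p i - (c + ρ • p i)‖ :=
            norm_sub_norm_le _ _
        _ = ‖p i - c‖ := by rw [this]
    have h1 : ‖(1 + ρ) • p i‖ = 1 + ρ := by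
      rw [norm_smul, hpn i, Real.norm_eq_abs, abs_of_nonneg (by linarith)]; ring
    linarith
  -- the union is bounded
  have hUsub : Set.range p ∪ Metric.closedBall c ρ ⊆ Metric.closedBall 0 1 := by
    rintro x (⟨i, rfl⟩ | hx)
    · exact hsub (hpK i)
    · exact hsub (hball hx)
  have hUbdd : Bornology.IsBounded (Set.range p ∪ Metric.closedBall c ρ) :=
    (Metric.isBounded_closedBall).subset hUsub
  rw [sDiam, sDiam, convexHull_diam, convexHull_diam]
  apply le_antisymm
  · -- upper bound
    have hRHS0 : 0 ≤ max (Metric.diam (Set.range p)) (⨆ i, ‖p i - c‖ + ρ) :=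
      le_max_of_le_left Metric.diam_nonneg
    apply Metric.diam_le_of_forall_dist_le hRHS0
    have haux : ∀ (i : Fin k) (y), y ∈ Metric.closedBall c ρ →
        dist (p i) y ≤ max (Metric.diam (Set.range p)) (⨆ j, ‖p j - c‖ + ρ) := by
      intro i y hy
      have : dist (p i) y ≤ ‖p i - c‖ + ρ := by
        calc dist (p i) y ≤ dist (p i) c + dist c y := dist_triangle _ _ _
          _ ≤ ‖p i - c‖ + ρ := by
              rw [dist_eq_norm, dist_comm]
              exact add_le_add le_rfl (Metric.mem_closedBall.mp hy)
      exact this.trans ((le_ciSup hbdd i).trans (le_max_right _ _))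
    rintro x (⟨i, rfl⟩ | hx) y (⟨j, rfl⟩ | hy)
    · exact le_max_of_le_left (Metric.dist_le_diam_of_mem
        ((Set.finite_range p).isBounded) ⟨i, rfl⟩ ⟨j, rfl⟩)
    · exact haux i y hy
    · rw [dist_comm]; exact haux j x hx
    · -- both in ball : dist ≤ 2ρ
      have h2 : dist x y ≤ ρ + ρ := by
        calc dist x y ≤ dist x c + dist c y := dist_triangle _ _ _
          _ ≤ ρ + ρ := add_le_add (Metric.mem_closedBall.mp hx)
              (by rw [dist_comm]; exact Metric.mem_closedBall.mp hy)
      have h3 : ρ + ρ ≤ ‖p ⟨0, hk⟩ - c‖ + ρ := add_le_add (hkey _) le_rfl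
      exact (h2.trans h3).trans ((le_ciSup hbdd _).trans (le_max_right _ _))
  · -- lower bound
    apply max_le
    · exact Metric.diam_mono (Set.subset_union_left) hUbdd
    · apply ciSup_le
      intro i
      by_cases hc : c = p i
      · have : ‖p i - c‖ + ρ = 0 := by
          have := hkey i
          rw [hc] at this ⊢
          simp only [sub_self, norm_zero] at this ⊢
          linarith
        rw [this]; exact Metric.diam_nonneg
      · set d := ‖c - p i‖ with hd
        have hd0 : 0 < d := by
          rw [hd, norm_pos_iff]; exact sub_ne_zero_of_ne hc
        set u : EuclideanSpace ℝ (Fin n) := d⁻¹ • (c - p i) with hu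
        have hun : ‖u‖ = 1 := by
          rw [hu, norm_smul, Real.norm_eq_abs, abs_inv, abs_of_pos hd0, ← hd, inv_mul_cancel₀ hd0.ne']
        set z := c + ρ • u with hz
        have hzb : z ∈ Metric.closedBall c ρ := by
          simp [hz, dist_eq_norm, norm_smul, hun, abs_of_nonneg hρ]
        have hdu : c - p i = d • u := by
          rw [hu, smul_smul, mul_inv_cancel₀ hd0.ne', one_smul]
        have hdist : dist (p i) z = ‖p i - c‖ + ρ := by
          have h1 : p i - z = -((d + ρ) • u) := by
            rw [hz]
            have : p i - (c + ρ • u) = -((c - p i) + ρ • u) := by module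
            rw [this, hdu]; module
          rw [dist_eq_norm, h1, norm_neg, norm_smul, hun, mul_one, Real.norm_eq_abs,
            abs_of_nonneg (by positivity), norm_sub_rev, ← hd]
        rw [← hdist]
        exact Metric.dist_le_diam_of_mem hUbdd (Or.inl ⟨i, rfl⟩) (Or.inr hzb)
end

section
/- Let K be a convex body in Euclidean n-space ℝⁿ with closedBall(0, r(K)) ⊆ K ⊆ closedBall(0,1), R(K) = 1, and w(K) = r(K) + 1. Then for every unit vector s ∈ ℝⁿ with −r(K)·s ∈ frontier(K), one has s ∈ K. -/
open Metric Set
open scoped RealInnerProductSpace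

theorem boundary_point_of_inball (n : ℕ) (K : Set (EuclideanSpace ℝ (Fin n)))
    (hne : K.Nonempty) (hcp : IsCompact K) (hcv : Convex ℝ K)
    (hball : Metric.closedBall (0 : EuclideanSpace ℝ (Fin n)) (inradius K) ⊆ K)
    (hsub : K ⊆ Metric.closedBall 0 1)
    (hR : circumradius K = 1) (hw : width K = inradius K + 1)
    (s : EuclideanSpace ℝ (Fin n)) (hs : ‖s‖ = 1)
    (hfr : -(inradius K) • s ∈ frontier K) : s ∈ K := by
  classical
  set r := inradius K with hrdef
  obtain ⟨x₀, hx₀⟩ := hne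
  -- norms of elements of K are at most 1
  have hKnorm : ∀ x ∈ K, ‖x‖ ≤ 1 := fun x hx => by
    simpa [mem_closedBall, dist_zero_right] using hsub hx
  -- the inradius candidate set is bounded above
  have hbdd : BddAbove {ρ : ℝ | 0 ≤ ρ ∧ ∃ c, Metric.closedBall c ρ ⊆ K} := by
    refine ⟨1, fun ρ hρ => ?_⟩
    obtain ⟨hρ0, c, hc⟩ := hρ
    have h1 : c + ρ • s ∈ Metric.closedBall c ρ := by
      simp [mem_closedBall, dist_eq_norm, norm_smul, hs, abs_of_nonneg hρ0]
    have h2 : c - ρ • s ∈ Metric.closedBall c ρ := by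
      simp [mem_closedBall, dist_eq_norm, norm_smul, hs, abs_of_nonneg hρ0]
    have hn1 : ‖c + ρ • s‖ ≤ 1 := hKnorm _ (hc h1)
    have hn2 : ‖c - ρ • s‖ ≤ 1 := hKnorm _ (hc h2)
    have hdiff : (c + ρ • s) - (c - ρ • s) = (2 * ρ) • s := by
      rw [two_mul, add_smul]; abel
    have : ‖(c + ρ • s) - (c - ρ • s)‖ ≤ 2 := by
      calc ‖(c + ρ • s) - (c - ρ • s)‖ ≤ ‖c + ρ • s‖ + ‖c - ρ • s‖ := norm_sub_le _ _
        _ ≤ 2 := by linarith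
    rw [hdiff, norm_smul, hs, mul_one] at this
    rw [Real.norm_eq_abs, abs_of_nonneg (by linarith : (0:ℝ) ≤ 2 * ρ)] at this
    linarith
  have hr0 : 0 ≤ r :=
    le_csSup hbdd ⟨le_refl 0, x₀, by simp [Metric.closedBall_zero, hx₀]⟩
  -- bounds for breadth sets
  have himfacts : ∀ u : EuclideanSpace ℝ (Fin n), ‖u‖ = 1 →
      ((fun x => (inner ℝ u x : ℝ)) '' K).Nonempty ∧
      BddAbove ((fun x => (inner ℝ u x : ℝ)) '' K) ∧
      BddBelow ((fun x => (inner ℝ u x : ℝ)) '' K) := by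
    intro u hu
    refine ⟨⟨_, ⟨x₀, hx₀, rfl⟩⟩, ⟨1, ?_⟩, ⟨-1, ?_⟩⟩
    · rintro y ⟨x, hx, rfl⟩
      calc (inner ℝ u x : ℝ) ≤ ‖u‖ * ‖x‖ := real_inner_le_norm u x
        _ ≤ 1 := by rw [hu, one_mul]; exact hKnorm x hx
    · rintro y ⟨x, hx, rfl⟩
      have := real_inner_le_norm u (-x)
      rw [inner_neg_right, norm_neg, hu, one_mul] at this
      have hx1 := hKnorm x hx
      simp only [mem_lowerBounds] at *
      linarith
  -- the width candidate set is bounded below by 0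
  have hWbdd : BddBelow {b : ℝ | ∃ u : EuclideanSpace ℝ (Fin n), ‖u‖ = 1 ∧
      b = sSup ((fun x => (inner ℝ u x : ℝ)) '' K) - sInf ((fun x => (inner ℝ u x : ℝ)) '' K)} := by
    refine ⟨0, fun b hb => ?_⟩
    obtain ⟨u, hu, rfl⟩ := hb
    obtain ⟨⟨y, hy⟩, hA, hB⟩ := himfacts u hu
    have h1 : sInf _ ≤ y := csInf_le hB hy
    have h2 : y ≤ sSup _ := le_csSup hA hy
    linarith
  rcases lt_or_eq_of_le hr0 with hrpos | hrzero
  · -- case r > 0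
    have h0i : (0 : EuclideanSpace ℝ (Fin n)) ∈ interior K :=
      mem_interior.2 ⟨Metric.ball 0 r, fun y hy => hball (Metric.ball_subset_closedBall hy),
        Metric.isOpen_ball, Metric.mem_ball_self hrpos⟩
    have hp : -(r) • s ∉ interior K := hfr.2
    obtain ⟨f, hf⟩ := geometric_hahn_banach_open_point (hcv.interior) isOpen_interior hp
    set u := (InnerProductSpace.toDual ℝ (EuclideanSpace ℝ (Fin n))).symm f with hudef
    have hfu : ∀ x : EuclideanSpace ℝ (Fin n), (inner ℝ u x : ℝ) = f x := fun x => InnerProductSpace.toDual_symm_apply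
    -- f ≤ f p on all of K (closure of interior)
    have hKle : ∀ x ∈ K, f x ≤ f (-(r) • s) := by
      intro x hx
      have hclosed : IsClosed {y : EuclideanSpace ℝ (Fin n) | f y ≤ f (-(r) • s)} :=
        isClosed_le f.continuous continuous_const
      have hsubset : interior K ⊆ {y : EuclideanSpace ℝ (Fin n) | f y ≤ f (-(r) • s)} :=
        fun y hy => le_of_lt (hf y hy)
      have hxcl : x ∈ closure (interior K) := by
        have htend : Filter.Tendsto (fun a : ℝ => a • x) (nhdsWithin 1 (Set.Iio 1)) (nhds x) := by
          have : Filter.Tendsto (fun a : ℝ => a • x) (nhds 1) (nhds ((1:ℝ) • x)) :=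
            (continuous_id.smul continuous_const).tendsto 1
          rw [one_smul] at this
          exact this.mono_left nhdsWithin_le_nhds
        refine mem_closure_of_tendsto htend ?_
        filter_upwards [Ioo_mem_nhdsLT_of_mem (by norm_num : (1:ℝ) ∈ Set.Ioc 0 1)]
          with a ha
        have := hcv.combo_closure_interior_mem_interior (subset_closure hx) h0i
          (le_of_lt ha.1) (by linarith [ha.2] : (0:ℝ) < 1 - a) (by ring)
        simpa using this
      exact (hclosed.closure_subset_iff.2 hsubset) hxcl
    have hune : u ≠ 0 := by
      intro h
      have h1 := hf 0 h0i
      rw [← hfu, ← hfu, h] at h1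
      simp at h1
    have hunorm : 0 < ‖u‖ := norm_pos_iff.2 hune
    set v : EuclideanSpace ℝ (Fin n) := ‖u‖⁻¹ • u with hvdef
    have hvnorm : ‖v‖ = 1 := by
      rw [hvdef, norm_smul, Real.norm_eq_abs, abs_of_nonneg (inv_nonneg.2 hunorm.le), inv_mul_cancel₀ hunorm.ne']
    have hKv : ∀ x ∈ K, (inner ℝ v x : ℝ) ≤ (inner ℝ v (-(r) • s) : ℝ) := by
      intro x hx
      rw [hvdef, real_inner_smul_left, real_inner_smul_left, hfu, hfu]
      exact mul_le_mul_of_nonneg_left (hKle x hx) (inv_nonneg.2 hunorm.le)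
    -- the point r • v is in K
    have hrv : (r • v) ∈ K := by
      apply hball
      rw [Metric.mem_closedBall, dist_zero_right, norm_smul, hvnorm, mul_one,
        Real.norm_eq_abs, abs_of_nonneg hr0]
    -- the supporting direction must be -s
    clear_value v
    have h1 : (inner ℝ v (r • v) : ℝ) ≤ (inner ℝ v (-(r) • s) : ℝ) := hKv _ hrv
    rw [real_inner_smul_right, real_inner_smul_right, real_inner_self_eq_norm_mul_norm,
      hvnorm] at h1
    have hvs : (inner ℝ v s : ℝ) ≤ -1 := by nlinarith
    have hveq : v = -s := by
      have h2 : ‖v + s‖ ^ 2 ≤ 0 := by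
        rw [norm_add_sq_real, hvnorm, hs]; nlinarith
      have h3 : ‖v + s‖ ^ 2 = 0 := le_antisymm h2 (sq_nonneg _)
      have h4 : v + s = 0 := by
        rwa [pow_eq_zero_iff two_ne_zero, norm_eq_zero] at h3
      exact eq_neg_of_add_eq_zero_left h4
    have hKge : ∀ x ∈ K, -r ≤ (inner ℝ s x : ℝ) := by
      intro x hx
      have h5 := hKv x hx
      rw [hveq, inner_neg_left, inner_neg_left, real_inner_smul_right,
        real_inner_self_eq_norm_mul_norm, hs] at h5
      linarith
    -- breadth in direction s
    obtain ⟨himne, himA, himB⟩ := himfacts s hs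
    have hA : sSup ((fun x => (inner ℝ s x : ℝ)) '' K) ≤ 1 := by
      apply csSup_le himne
      rintro y ⟨x, hx, rfl⟩
      calc (inner ℝ s x : ℝ) ≤ ‖s‖ * ‖x‖ := real_inner_le_norm s x
        _ ≤ 1 := by rw [hs, one_mul]; exact hKnorm x hx
    have hB : -r ≤ sInf ((fun x => (inner ℝ s x : ℝ)) '' K) := by
      apply le_csInf himne
      rintro y ⟨x, hx, rfl⟩
      exact hKge x hx
    have hwle : width K ≤ sSup ((fun x => (inner ℝ s x : ℝ)) '' K)
        - sInf ((fun x => (inner ℝ s x : ℝ)) '' K) :=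
      csInf_le hWbdd ⟨s, hs, rfl⟩
    rw [hw] at hwle
    have hA1 : 1 ≤ sSup ((fun x => (inner ℝ s x : ℝ)) '' K) := by linarith
    obtain ⟨x, hxK, hmax⟩ := hcp.exists_isMaxOn ⟨x₀, hx₀⟩
      ((continuous_const.inner continuous_id).continuousOn
        : ContinuousOn (fun x => (inner ℝ s x : ℝ)) K)
    have hx1 : 1 ≤ (inner ℝ s x : ℝ) := by
      refine le_trans hA1 (csSup_le himne ?_)
      rintro y ⟨z, hz, rfl⟩
      exact hmax hz
    have hxn : ‖x‖ ≤ 1 := hKnorm x hxK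
    have h6 : ‖s - x‖ ^ 2 ≤ 0 := by
      rw [norm_sub_sq_real, hs]; nlinarith [norm_nonneg x, hxn, hx1]
    have h7 : s - x = 0 := by
      have := le_antisymm h6 (sq_nonneg _)
      rwa [pow_eq_zero_iff two_ne_zero, norm_eq_zero] at this
    rw [sub_eq_zero.1 h7]
    exact hxK
  · -- case r = 0 : impossible
    exfalso
    have hint : interior K = ∅ := by
      by_contra h
      rw [← Ne, ← Set.nonempty_iff_ne_empty] at h
      obtain ⟨x, hx⟩ := h
      obtain ⟨ε, hε, hb⟩ := Metric.isOpen_iff.1 isOpen_interior x hx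
      have hmem : ε / 2 ∈ {ρ : ℝ | 0 ≤ ρ ∧ ∃ c, Metric.closedBall c ρ ⊆ K} := by
        refine ⟨by linarith, x, fun y hy => interior_subset (hb ?_)⟩
        rw [Metric.mem_ball]
        calc dist y x ≤ ε / 2 := Metric.mem_closedBall.1 hy
          _ < ε := by linarith
      have h2 : ε / 2 ≤ inradius K := le_csSup hbdd hmem
      rw [← hrdef, ← hrzero] at h2
      linarith
    have hspan : affineSpan ℝ K ≠ ⊤ := by
      intro h
      have := (hcv.interior_nonempty_iff_affineSpan_eq_top).2 h
      rw [hint] at this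
      exact Set.not_nonempty_empty this
    have hdir : (affineSpan ℝ K).direction ≠ ⊤ := fun h =>
      hspan ((AffineSubspace.direction_eq_top_iff_of_nonempty
        ⟨x₀, subset_affineSpan ℝ K hx₀⟩).1 h)
    have horth : ((affineSpan ℝ K).direction)ᗮ ≠ ⊥ :=
      fun h => hdir (Submodule.orthogonal_eq_bot_iff.1 h)
    obtain ⟨u, huo, hune⟩ := Submodule.exists_mem_ne_zero_of_ne_bot horth
    have hunorm : 0 < ‖u‖ := norm_pos_iff.2 hune
    set w : EuclideanSpace ℝ (Fin n) := ‖u‖⁻¹ • u with hwdef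
    have hw1 : ‖w‖ = 1 := by
      rw [hwdef, norm_smul, Real.norm_eq_abs, abs_of_nonneg (inv_nonneg.2 hunorm.le),
        inv_mul_cancel₀ hunorm.ne']
    have hwo : w ∈ ((affineSpan ℝ K).direction)ᗮ := Submodule.smul_mem _ _ huo
    have hconst : ∀ x ∈ K, (inner ℝ w x : ℝ) = (inner ℝ w x₀ : ℝ) := by
      intro x hx
      have hmem : x - x₀ ∈ (affineSpan ℝ K).direction :=
        AffineSubspace.vsub_mem_direction (subset_affineSpan ℝ K hx)
          (subset_affineSpan ℝ K hx₀)
      have h0 := (Submodule.mem_orthogonal' _ _).1 hwo _ hmem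
      rw [inner_sub_right] at h0
      linarith
    have him : (fun x => (inner ℝ w x : ℝ)) '' K = {(inner ℝ w x₀ : ℝ)} := by
      apply Set.Subset.antisymm
      · rintro y ⟨x, hx, rfl⟩
        exact hconst x hx
      · rw [Set.singleton_subset_iff]
        exact ⟨x₀, hx₀, rfl⟩
    have h0W : (0:ℝ) ∈ {b : ℝ | ∃ u : EuclideanSpace ℝ (Fin n), ‖u‖ = 1 ∧
        b = sSup ((fun x => (inner ℝ u x : ℝ)) '' K) - sInf ((fun x => (inner ℝ u x : ℝ)) '' K)} :=
      ⟨w, hw1, by rw [him, csSup_singleton, csInf_singleton]; ring⟩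
    have hfin : width K ≤ 0 := csInf_le hWbdd h0W
    rw [hw, ← hrzero] at hfin
    linarith
end
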